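/- arXiv:1806.01641 — 10 statements merged into one kernel-verified Lean document; each statement's English description precedes it below -/
import Mathlib

section
/- For every u in the open interval (1/√3, √3), the identity ψ₁(u) + ψ₂(u) = 3 holds (equivalently, 4 − ψ₁(u) − ψ₂(u) = 1). -/
noncomputable def mParam (u : ℝ) : ℝ :=
  (8 * u ^ 3 - u ^ 3 * (1 + u ^ 2) ^ ((3 : ℝ) / 2)) /
    (8 * u ^ 3 - (1 + u ^ 2) ^ ((3 : ℝ) / 2))

noncomputable def alphaParam (u : ℝ) : ℝ :=
  Real.sqrt (2 * mParam u * u ^ 2 + 2)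

noncomputable def muParam (u : ℝ) : ℝ :=
  4 * mParam u * alphaParam u / Real.sqrt (1 + u ^ 2) +
    alphaParam u * (mParam u) ^ 2 / (2 * u) + alphaParam u / 2

noncomputable def phi1 (u : ℝ) : ℝ :=
  1 + 2 * (mParam u + 1) * (alphaParam u) ^ 3 * (2 - u ^ 2) /
    (muParam u * (1 + u ^ 2) ^ ((5 : ℝ) / 2))

noncomputable def phi2 (u : ℝ) : ℝ :=
  1 + 2 * (mParam u + 1) * (alphaParam u) ^ 3 * (2 * u ^ 2 - 1) /
    (muParam u * (1 + u ^ 2) ^ ((5 : ℝ) / 2))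

noncomputable def psi1 (u : ℝ) : ℝ :=
  1 + (4 * alphaParam u / muParam u) *
    ((2 * (mParam u) ^ 2 * u ^ 4 + (6 * mParam u - (mParam u) ^ 2 - 1) * u ^ 2 + 2) /
        (1 + u ^ 2) ^ ((5 : ℝ) / 2) -
      mParam u * u ^ 2 / 8 - mParam u / (8 * u ^ 3))

noncomputable def psi2 (u : ℝ) : ℝ :=
  1 + (4 * alphaParam u / muParam u) *
    ((-(mParam u) ^ 2 * u ^ 4 + (2 * (mParam u) ^ 2 - 6 * mParam u + 2) * u ^ 2 - 1) /
        (1 + u ^ 2) ^ ((5 : ℝ) / 2) +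
      mParam u * u ^ 2 / 4 + mParam u / (4 * u ^ 3))

/-- For every `u ∈ (1/√3, √3)`, `ψ₁(u) + ψ₂(u) = 3`. -/
theorem psi_sum_eq_three (u : ℝ) (hu1 : 1 / Real.sqrt 3 < u) (hu2 : u < Real.sqrt 3) :
    psi1 u + psi2 u = 3 := by
  have hs3 : Real.sqrt 3 ^ 2 = 3 := Real.sq_sqrt (by norm_num)
  have hs3pos : (0:ℝ) < Real.sqrt 3 := Real.sqrt_pos.mpr (by norm_num)
  have hu0 : 0 < u := lt_trans (by positivity) hu1
  have h3u : 1 < 3 * u ^ 2 := by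
    have h1 : 1 < u * Real.sqrt 3 := by
      rw [div_lt_iff₀ hs3pos] at hu1; linarith
    nlinarith
  have hu23 : u ^ 2 < 3 := by nlinarith [Real.sqrt_nonneg 3]
  set t := Real.sqrt (1 + u ^ 2) with htdef
  have ht0 : 0 < t := Real.sqrt_pos.mpr (by positivity)
  have ht2 : t ^ 2 = 1 + u ^ 2 := Real.sq_sqrt (by positivity)
  have htr : (1 + u ^ 2 : ℝ) ^ (2⁻¹ : ℝ) = t := by
    rw [htdef, Real.sqrt_eq_rpow]; norm_num
  have hr3 : (1 + u ^ 2) ^ ((3 : ℝ) / 2) = t ^ 3 := by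
    rw [show ((3:ℝ)/2) = (2⁻¹ : ℝ) * ((3:ℕ):ℝ) by norm_num,
      Real.rpow_mul (by positivity), Real.rpow_natCast, htr]
  have hr5 : (1 + u ^ 2) ^ ((5 : ℝ) / 2) = t ^ 5 := by
    rw [show ((5:ℝ)/2) = (2⁻¹ : ℝ) * ((5:ℕ):ℝ) by norm_num,
      Real.rpow_mul (by positivity), Real.rpow_natCast, htr]
  have ht2u : t < 2 * u := by nlinarith
  have ht2' : t < 2 := by nlinarith
  have hden : 0 < 8 * u ^ 3 - t ^ 3 := by nlinarith
  have hnum : 0 < 8 - t ^ 3 := by nlinarith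
  set m := mParam u with hmdef
  have hm_eq : m * (8 * u ^ 3 - t ^ 3) = u ^ 3 * (8 - t ^ 3) := by
    rw [hmdef, mParam, hr3, div_mul_cancel₀ _ (ne_of_gt hden)]; ring
  have hmpos : 0 < m := by
    rw [hmdef, mParam, hr3]
    apply div_pos _ hden
    nlinarith [mul_pos (pow_pos hu0 3) hnum]
  set a := alphaParam u with hadef
  have ha0 : 0 < a := by
    rw [hadef, alphaParam]
    apply Real.sqrt_pos.mpr; nlinarith
  set μ := muParam u with hμdef
  have hμ : μ = 4 * m * a / t + a * m ^ 2 / (2 * u) + a / 2 := by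
    rw [hμdef, muParam, ← htdef, ← hmdef, ← hadef]
  have hμpos : 0 < μ := by
    rw [hμ]
    have h1 : 0 < 4 * m * a / t := by positivity
    have h2 : 0 < a * m ^ 2 / (2 * u) := by positivity
    positivity
  simp only [psi1, psi2, hr5, ← hmdef, ← hadef, ← hμdef]
  set B1 : ℝ := (2 * m ^ 2 * u ^ 4 + (6 * m - m ^ 2 - 1) * u ^ 2 + 2) / t ^ 5
      - m * u ^ 2 / 8 - m / (8 * u ^ 3) with hB1
  set B2 : ℝ := (-m ^ 2 * u ^ 4 + (2 * m ^ 2 - 6 * m + 2) * u ^ 2 - 1) / t ^ 5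
      + m * u ^ 2 / 4 + m / (4 * u ^ 3) with hB2
  have hsum : B1 + B2 = (m ^ 2 * u ^ 2 + 1) / t ^ 3 + m * u ^ 2 / 8 + m / (8 * u ^ 3) := by
    rw [hB1, hB2]
    have h5 : (t:ℝ) ^ 5 = t ^ 3 * t ^ 2 := by ring
    rw [h5, ht2]
    field_simp
    ring
  have hpoly : 8 * u ^ 3 * (m ^ 2 * u ^ 2 + 1) + m * u ^ 5 * t ^ 3 + m * t ^ 3
      = 8 * m * u ^ 3 * t ^ 2 + m ^ 2 * u ^ 2 * t ^ 3 + u ^ 3 * t ^ 3 := by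
    linear_combination (m * u ^ 2 - 1) * hm_eq - 8 * m * u ^ 3 * ht2
  have key : 4 * a * (B1 + B2) = μ := by
    have e1 : (m ^ 2 * u ^ 2 + 1) / t ^ 3 + m * u ^ 2 / 8 + m / (8 * u ^ 3)
        = (8 * u ^ 3 * (m ^ 2 * u ^ 2 + 1) + m * u ^ 5 * t ^ 3 + m * t ^ 3) / (8 * u ^ 3 * t ^ 3) := by
      field_simp
    have e2 : 4 * m * a / t + a * m ^ 2 / (2 * u) + a / 2
        = 4 * a * ((8 * m * u ^ 3 * t ^ 2 + m ^ 2 * u ^ 2 * t ^ 3 + u ^ 3 * t ^ 3) / (8 * u ^ 3 * t ^ 3)) := by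
      field_simp
      ring
    rw [hsum, hμ, e1, e2, hpoly]
  have : 4 * a / μ * B1 + 4 * a / μ * B2 = 1 := by
    rw [div_mul_eq_mul_div, div_mul_eq_mul_div, ← add_div,
      show 4 * a * B1 + 4 * a * B2 = 4 * a * (B1 + B2) by ring, key,
      div_self (ne_of_gt hμpos)]
  linarith
end

section
/- For every u in the open interval (1/√3, √3), one has φ₁(u) = φ₂(1/u) (note that 1/u also lies in (1/√3, √3)). -/
lemma mu_aux (a s u t : ℝ) (ht : t ≠ 0) (hu : u ≠ 0) (hs : s ≠ 0) :
    4 * (t ^ 2)⁻¹ * (a / (u * t)) / (s / u) +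
      a / (u * t) * ((t ^ 2)⁻¹) ^ 2 / (2 * (1 / u)) + a / (u * t) / 2 =
    (4 * t ^ 2 * a / s + a * (t ^ 2) ^ 2 / (2 * u) + a / 2) / ((t ^ 2) ^ 2 * t) := by
  field_simp
  ring

lemma phi_aux (a p P u t : ℝ) (ht : t ≠ 0) (hu : u ≠ 0) (hp : p ≠ 0) (hP : P ≠ 0) :
    2 * (t ^ 2 + 1) * a ^ 3 * (2 - u ^ 2) / (p * P) =
    2 * ((t ^ 2)⁻¹ + 1) * (a / (u * t)) ^ 3 * (2 * (1 / u) ^ 2 - 1) /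
      (p / ((t ^ 2) ^ 2 * t) * (P / u ^ 5)) := by
  field_simp
  ring

/-- For every `u ∈ (1/√3, √3)`, `φ₁(u) = φ₂(1/u)`. -/
theorem phi1_eq_phi2_inv (u : ℝ) (hu1 : 1 / Real.sqrt 3 < u) (hu2 : u < Real.sqrt 3) :
    phi1 u = phi2 (1 / u) := by
  have h3 : (0:ℝ) < Real.sqrt 3 := Real.sqrt_pos.mpr (by norm_num)
  have hu0 : 0 < u := lt_trans (by positivity) hu1
  have hsq3 : (Real.sqrt 3) ^ 2 = 3 := Real.sq_sqrt (by norm_num)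
  have h13 : 1 / 3 < u ^ 2 := by
    have := (div_lt_iff₀ h3).mp hu1
    nlinarith
  have hu3 : u ^ 2 < 3 := by nlinarith
  have hA : (0:ℝ) < 1 + u ^ 2 := by positivity
  have h432 : (4:ℝ) ^ ((3:ℝ)/2) = 8 := by
    rw [show (4:ℝ) = 2 ^ (2:ℕ) by norm_num, ← Real.rpow_natCast 2 2,
      ← Real.rpow_mul (by norm_num)]
    norm_num
  have hu32 : ((u ^ 2 : ℝ)) ^ ((3:ℝ)/2) = u ^ 3 := by
    rw [← Real.rpow_natCast u 2, ← Real.rpow_mul hu0.le]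
    norm_num
  have hu52 : ((u ^ 2 : ℝ)) ^ ((5:ℝ)/2) = u ^ 5 := by
    rw [← Real.rpow_natCast u 2, ← Real.rpow_mul hu0.le]
    norm_num
  have hs8 : (1 + u ^ 2) ^ ((3:ℝ)/2) < 8 := by
    calc (1 + u ^ 2) ^ ((3:ℝ)/2) < (4:ℝ) ^ ((3:ℝ)/2) :=
          Real.rpow_lt_rpow hA.le (by nlinarith) (by norm_num)
      _ = 8 := h432
  have hslt : (1 + u ^ 2) ^ ((3:ℝ)/2) < 8 * u ^ 3 := by
    calc (1 + u ^ 2) ^ ((3:ℝ)/2) < (4 * u ^ 2) ^ ((3:ℝ)/2) :=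
          Real.rpow_lt_rpow hA.le (by nlinarith) (by norm_num)
      _ = 8 * u ^ 3 := by
          rw [Real.mul_rpow (by norm_num) (sq_nonneg u), h432, hu32]
  have hspos : (0:ℝ) < (1 + u ^ 2) ^ ((3:ℝ)/2) := Real.rpow_pos_of_pos hA _
  have hm : 0 < mParam u := by
    unfold mParam
    apply div_pos
    · nlinarith
    · linarith
  have hα : 0 < alphaParam u := Real.sqrt_pos.mpr (by positivity)
  have hsA : (0:ℝ) < Real.sqrt (1 + u ^ 2) := Real.sqrt_pos.mpr hA
  have hμ : 0 < muParam u := by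
    unfold muParam
    have h1 : 0 < 4 * mParam u * alphaParam u / Real.sqrt (1 + u ^ 2) := by positivity
    have h2 : 0 < alphaParam u * (mParam u) ^ 2 / (2 * u) := by positivity
    positivity
  have h1u : (1 + (1/u) ^ 2 : ℝ) = (1 + u ^ 2) / u ^ 2 := by field_simp; ring
  have hD1v : (8 * (1/u) ^ 3 - (1 + u ^ 2) ^ ((3:ℝ)/2) / u ^ 3) ≠ 0 := by
    have : 8 * (1/u) ^ 3 - (1 + u ^ 2) ^ ((3:ℝ)/2) / u ^ 3
        = (8 - (1 + u ^ 2) ^ ((3:ℝ)/2)) / u ^ 3 := by field_simp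
    rw [this]
    exact ne_of_gt (div_pos (by linarith) (by positivity))
  -- m(1/u) = m(u)⁻¹
  have hmv : mParam (1/u) = (mParam u)⁻¹ := by
    unfold mParam
    rw [h1u, Real.div_rpow hA.le (sq_nonneg u), hu32]
    rw [inv_div]
    rw [div_eq_div_iff hD1v (by nlinarith)]
    field_simp
  set m := mParam u with hmdef
  have htm : Real.sqrt m ^ 2 = m := Real.sq_sqrt hm.le
  have htm0 : (0:ℝ) < Real.sqrt m := Real.sqrt_pos.mpr hm
  -- alpha(1/u)
  have hαv : alphaParam (1/u) = alphaParam u / (u * Real.sqrt m) := by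
    unfold alphaParam
    rw [hmv]
    rw [show (2 * m⁻¹ * (1/u) ^ 2 + 2 : ℝ) = (2 * m * u ^ 2 + 2) / (u ^ 2 * m) by
      field_simp; ring]
    rw [Real.sqrt_div (by positivity), Real.sqrt_mul (sq_nonneg u), Real.sqrt_sq hu0.le]
  -- sqrt(1 + (1/u)^2)
  have hsv : Real.sqrt (1 + (1/u) ^ 2) = Real.sqrt (1 + u ^ 2) / u := by
    rw [h1u, Real.sqrt_div hA.le, Real.sqrt_sq hu0.le]
  -- mu(1/u)
  have hμv : muParam (1/u) = muParam u / (m ^ 2 * Real.sqrt m) := by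
    unfold muParam
    rw [hmv, hαv, hsv, ← hmdef]
    have key := mu_aux (alphaParam u) (Real.sqrt (1 + u ^ 2)) u (Real.sqrt m)
      htm0.ne' hu0.ne' hsA.ne'
    rw [htm] at key
    exact key
  have hP : (0:ℝ) < (1 + u ^ 2) ^ ((5:ℝ)/2) := Real.rpow_pos_of_pos hA _
  unfold phi1 phi2
  rw [hmv, hαv, hμv, h1u, Real.div_rpow hA.le (sq_nonneg u), hu52, ← hmdef]
  congr 1
  have key := phi_aux (alphaParam u) (muParam u) ((1 + u ^ 2) ^ ((5:ℝ)/2)) u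
    (Real.sqrt m) htm0.ne' hu0.ne' hμ.ne' hP.ne'
  rw [htm] at key
  exact key
end

section
/- For every u in the open interval (1/√3, √3), one has ψ₁(u) = ψ₁(1/u) and ψ₂(u) = ψ₂(1/u) (note that 1/u also lies in (1/√3, √3)). -/
set_option maxHeartbeats 1000000

private lemma rpow_three_halves' (x : ℝ) (hx : 0 ≤ x) :
    x ^ ((3:ℝ)/2) = Real.sqrt x ^ 3 := by
  rw [Real.sqrt_eq_rpow, ← Real.rpow_natCast (x ^ ((1:ℝ)/2)) 3, ← Real.rpow_mul hx]
  norm_num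

private lemma rpow_five_halves' (x : ℝ) (hx : 0 ≤ x) :
    x ^ ((5:ℝ)/2) = Real.sqrt x ^ 5 := by
  rw [Real.sqrt_eq_rpow, ← Real.rpow_natCast (x ^ ((1:ℝ)/2)) 5, ← Real.rpow_mul hx]
  norm_num

/-- For every `u ∈ (1/√3, √3)`, `ψ₁(u) = ψ₁(1/u)` and `ψ₂(u) = ψ₂(1/u)`. -/
theorem psi_inv_symm (u : ℝ) (hu1 : 1 / Real.sqrt 3 < u) (hu2 : u < Real.sqrt 3) :
    psi1 u = psi1 (1 / u) ∧ psi2 u = psi2 (1 / u) := by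
  have h3 : (0:ℝ) < Real.sqrt 3 := Real.sqrt_pos.mpr (by norm_num)
  have hs3 : Real.sqrt 3 ^ 2 = 3 := Real.sq_sqrt (by norm_num)
  have hu : 0 < u := lt_trans (by positivity) hu1
  have hu0 : u ≠ 0 := hu.ne'
  have hua : u ^ 2 < 3 := by nlinarith
  have hub : 1 < 3 * u ^ 2 := by
    have h := (div_lt_iff₀ h3).mp hu1
    nlinarith
  set s := Real.sqrt (1 + u ^ 2) with hs_def
  have hs0 : 0 < s := Real.sqrt_pos.mpr (by positivity)
  have hs2 : s ^ 2 = 1 + u ^ 2 := Real.sq_sqrt (by positivity)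
  clear_value s
  have hsl2 : s < 2 := by nlinarith
  have hsl2u : s < 2 * u := by nlinarith
  have hc1 : s ^ 3 < 8 := by nlinarith [mul_pos hs0 hs0]
  have hc2 : s ^ 3 < 8 * u ^ 3 := by
    nlinarith [mul_pos hs0 hs0, mul_pos hu hu, mul_pos (mul_pos hs0 hs0) hs0]
  have h32 : (1 + u ^ 2) ^ ((3:ℝ)/2) = s ^ 3 := by
    rw [rpow_three_halves' _ (by positivity), hs_def]
  have h52 : (1 + u ^ 2) ^ ((5:ℝ)/2) = s ^ 5 := by
    rw [rpow_five_halves' _ (by positivity), hs_def]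
  have hinv : (1:ℝ) + (1/u) ^ 2 = (s/u) ^ 2 := by
    rw [div_pow, div_pow, hs2]; field_simp; ring
  have hsu0 : 0 < s / u := by positivity
  have h32' : (1 + (1/u) ^ 2) ^ ((3:ℝ)/2) = (s/u) ^ 3 := by
    rw [hinv, rpow_three_halves' _ (by positivity), Real.sqrt_sq hsu0.le]
  have h52' : (1 + (1/u) ^ 2) ^ ((5:ℝ)/2) = (s/u) ^ 5 := by
    rw [hinv, rpow_five_halves' _ (by positivity), Real.sqrt_sq hsu0.le]
  have hsqinv : Real.sqrt (1 + (1/u) ^ 2) = s / u := by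
    rw [hinv, Real.sqrt_sq hsu0.le]
  have hm_pos : 0 < mParam u := by
    unfold mParam
    rw [h32]
    apply div_pos
    · nlinarith [pow_pos hu 3]
    · nlinarith
  have hm_inv : mParam (1/u) = 1 / mParam u := by
    have key : mParam (1/u) = (8 * u ^ 3 - s ^ 3) / (8 * u ^ 3 - u ^ 3 * s ^ 3) := by
      unfold mParam
      rw [h32']
      have e1 : 8 * (1/u) ^ 3 - (1/u) ^ 3 * (s/u) ^ 3 = (8 * u ^ 3 - s ^ 3) / u ^ 6 := by
        field_simp
      have e2 : 8 * (1/u) ^ 3 - (s/u) ^ 3 = (8 * u ^ 3 - u ^ 3 * s ^ 3) / u ^ 6 := by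
        field_simp
      rw [e1, e2, div_div_div_comm, div_self (pow_ne_zero 6 hu0), div_one]
    rw [key]
    unfold mParam
    rw [h32, one_div, inv_div]
  have ha_pos : 0 < alphaParam u := Real.sqrt_pos.mpr (by nlinarith [sq_nonneg u])
  have ha2 : alphaParam u ^ 2 = 2 * mParam u * u ^ 2 + 2 :=
    Real.sq_sqrt (by nlinarith [sq_nonneg u])
  have ht_pos : 0 < Real.sqrt (mParam u) := Real.sqrt_pos.mpr hm_pos
  have ht2 : Real.sqrt (mParam u) ^ 2 = mParam u := Real.sq_sqrt hm_pos.le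
  set a := alphaParam u with ha_def
  set m := mParam u with hm_def
  set t := Real.sqrt m with ht_def
  clear_value a
  clear_value m
  clear_value t
  have ha_inv : alphaParam (1/u) = a / (u * t) := by
    unfold alphaParam
    rw [hm_inv]
    have key : 2 * (1/m) * (1/u) ^ 2 + 2 = (a / (u * t)) ^ 2 := by
      have h1 : (a / (u * t)) ^ 2 = a ^ 2 / (u ^ 2 * t ^ 2) := by
        rw [div_pow, mul_pow]
      rw [h1, ht2, ha2]
      field_simp
      ring
    rw [key, Real.sqrt_sq (by positivity)]
  have hmu_pos : 0 < muParam u := by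
    unfold muParam
    rw [← ha_def, ← hm_def, ← hs_def]
    positivity
  have hmu_inv : muParam (1/u) = muParam u / (m ^ 2 * t) := by
    unfold muParam
    rw [hm_inv, ha_inv, hsqinv, ← ha_def, ← hm_def, ← hs_def]
    field_simp
    ring
  set μ := muParam u with hmu_def
  clear_value μ
  have hratio : 4 * alphaParam (1/u) / muParam (1/u) = 4 * a * m ^ 2 / (u * μ) := by
    rw [ha_inv, hmu_inv]
    field_simp
  constructor
  · unfold psi1
    rw [hm_inv, h52', ← ha_def, ← hm_def, ← hmu_def, hratio, h52]
    field_simp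
    ring
  · unfold psi2
    rw [hm_inv, h52', ← ha_def, ← hm_def, ← hmu_def, hratio, h52]
    field_simp
    ring
end

section
/- The function φ₁ tends to 9/4 as u → (1/√3)⁺ and tends to 3/4 as u → (√3)⁻; the function φ₂ tends to 3/4 as u → (1/√3)⁺ and tends to 9/4 as u → (√3)⁻ (limits taken within the open interval (1/√3, √3)). -/
open Real Filter Set Topology

noncomputable def sP (u : ℝ) : ℝ := Real.sqrt (1 + u ^ 2)

lemma sP_def (u : ℝ) : Real.sqrt (1 + u ^ 2) = sP u := rfl

lemma one_add_sq_pos (u : ℝ) : (0:ℝ) < 1 + u ^ 2 := by positivity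

lemma sP_pos (u : ℝ) : 0 < sP u := Real.sqrt_pos.2 (one_add_sq_pos u)

lemma sP_sq (u : ℝ) : sP u ^ 2 = 1 + u ^ 2 := Real.sq_sqrt (one_add_sq_pos u).le

lemma sP_cont : Continuous sP := Real.continuous_sqrt.comp (by continuity)

lemma rpow_three_halves (u : ℝ) : (1 + u ^ 2) ^ ((3:ℝ)/2) = sP u ^ 3 := by
  rw [sP, Real.sqrt_eq_rpow, ← Real.rpow_natCast ((1 + u ^ 2) ^ ((1:ℝ)/2)) 3,
    ← Real.rpow_mul (one_add_sq_pos u).le]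
  norm_num

lemma rpow_five_halves (u : ℝ) : (1 + u ^ 2) ^ ((5:ℝ)/2) = sP u ^ 5 := by
  rw [sP, Real.sqrt_eq_rpow, ← Real.rpow_natCast ((1 + u ^ 2) ^ ((1:ℝ)/2)) 5,
    ← Real.rpow_mul (one_add_sq_pos u).le]
  norm_num

lemma mParam_eq (u : ℝ) :
    mParam u = (8 * u ^ 3 - u ^ 3 * sP u ^ 3) / (8 * u ^ 3 - sP u ^ 3) := by
  rw [mParam, rpow_three_halves]

-- interval facts
lemma sqrt3_pos : (0:ℝ) < Real.sqrt 3 := Real.sqrt_pos.2 (by norm_num)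
lemma sqrt3_sq : Real.sqrt 3 ^ 2 = 3 := Real.sq_sqrt (by norm_num)

lemma hu_pos {u : ℝ} (hu : u ∈ Ioo (1 / Real.sqrt 3) (Real.sqrt 3)) : 0 < u :=
  lt_trans (by positivity) hu.1

lemma sP_lt_two_mul {u : ℝ} (hu : u ∈ Ioo (1 / Real.sqrt 3) (Real.sqrt 3)) :
    sP u < 2 * u := by
  have h0 := hu_pos hu
  have h1 : 1 / Real.sqrt 3 < u := hu.1
  have h2 : (1:ℝ) / 3 < u ^ 2 := by
    have := mul_self_lt_mul_self (by positivity) h1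
    calc (1:ℝ)/3 = (1 / Real.sqrt 3) * (1 / Real.sqrt 3) := by
          rw [div_mul_div_comm]
          rw [show Real.sqrt 3 * Real.sqrt 3 = 3 by rw [← sq]; exact sqrt3_sq]
          norm_num
      _ < u * u := this
      _ = u ^ 2 := (sq u).symm
  have : 1 + u ^ 2 < (2 * u) ^ 2 := by nlinarith
  rw [sP]
  exact (Real.sqrt_lt' (by positivity)).2 this

lemma sP_lt_two {u : ℝ} (hu : u ∈ Ioo (1 / Real.sqrt 3) (Real.sqrt 3)) :
    sP u < 2 := by
  have h2 : u ^ 2 < 3 := by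
    have := mul_self_lt_mul_self (hu_pos hu).le hu.2
    calc u ^ 2 = u * u := sq u
      _ < Real.sqrt 3 * Real.sqrt 3 := this
      _ = 3 := by rw [← sq]; exact sqrt3_sq
  rw [sP]
  exact (Real.sqrt_lt' (by norm_num)).2 (by nlinarith)

lemma mParam_pos {u : ℝ} (hu : u ∈ Ioo (1 / Real.sqrt 3) (Real.sqrt 3)) :
    0 < mParam u := by
  have h0 := hu_pos hu
  have hs := sP_pos u
  have h1 : sP u ^ 3 < 8 * u ^ 3 := by
    have := pow_lt_pow_left₀ (sP_lt_two_mul hu) hs.le (by norm_num : 3 ≠ 0)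
    calc sP u ^ 3 < (2 * u) ^ 3 := this
      _ = 8 * u ^ 3 := by ring
  have h2 : sP u ^ 3 < 8 := by
    have := pow_lt_pow_left₀ (sP_lt_two hu) hs.le (by norm_num : 3 ≠ 0)
    norm_num at this; exact this
  rw [mParam_eq]
  have key : 0 < u ^ 3 * (8 - sP u ^ 3) := mul_pos (pow_pos h0 3) (by linarith)
  apply div_pos
  · have h3 : 8 * u ^ 3 - u ^ 3 * sP u ^ 3 = u ^ 3 * (8 - sP u ^ 3) := by ring
    rw [h3]; exact key
  · linarith

lemma alphaParam_sq {u : ℝ} (hu : u ∈ Ioo (1 / Real.sqrt 3) (Real.sqrt 3)) :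
    alphaParam u ^ 2 = 2 * mParam u * u ^ 2 + 2 := by
  rw [alphaParam]
  exact Real.sq_sqrt (by nlinarith [mParam_pos hu, sq_nonneg u])

lemma alphaParam_pos {u : ℝ} (hu : u ∈ Ioo (1 / Real.sqrt 3) (Real.sqrt 3)) :
    0 < alphaParam u := by
  rw [alphaParam]
  exact Real.sqrt_pos.2 (by nlinarith [mParam_pos hu, sq_nonneg u])

noncomputable def G (q : ℝ → ℝ) (p : ℝ × ℝ) : ℝ :=
  1 + 4 * p.1 * (1 + p.2) * (2 * p.1 ^ 2 + 2 * p.2) * q p.1 /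
    ((8 * p.2 * p.1 + sP p.1 + p.2 ^ 2 * p.1 * sP p.1) * sP p.1 ^ 4)

lemma phi_eq (q : ℝ → ℝ) {u : ℝ} (hu : u ∈ Ioo (1 / Real.sqrt 3) (Real.sqrt 3)) :
    1 + 2 * (mParam u + 1) * (alphaParam u) ^ 3 * q u /
      (muParam u * (1 + u ^ 2) ^ ((5 : ℝ) / 2)) = G q (u, (mParam u)⁻¹) := by
  have h0 := hu_pos hu
  have hs := sP_pos u
  have hm := mParam_pos hu
  have ha := alphaParam_pos hu
  have ha2 := alphaParam_sq hu
  have ha3 : alphaParam u ^ 3 = (2 * mParam u * u ^ 2 + 2) * alphaParam u := by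
    rw [pow_succ, ha2]
  set m := mParam u with hmdef
  set α := alphaParam u with hadef
  have hmu : muParam u = 4 * m * α / sP u + α * m ^ 2 / (2 * u) + α / 2 := by
    rw [muParam, sP_def]
  have hD : 0 < 4 * m * α / sP u + α * m ^ 2 / (2 * u) + α / 2 := by positivity
  have hG : 0 < (8 * m⁻¹ * u + sP u + (m⁻¹) ^ 2 * u * sP u) * sP u ^ 4 := by positivity
  rw [rpow_five_halves, ha3, hmu, G]
  simp only
  field_simp
  ring

lemma sP_at_a : sP (1 / Real.sqrt 3) = 2 / Real.sqrt 3 := by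
  have h3 := sqrt3_sq
  have h3p := sqrt3_pos
  rw [sP, show 1 + (1 / Real.sqrt 3) ^ 2 = (2 / Real.sqrt 3) ^ 2 by
    field_simp; linarith]
  exact Real.sqrt_sq (by positivity)

lemma tendsto_inv_m :
    Tendsto (fun u => (mParam u)⁻¹)
      (nhdsWithin (1 / Real.sqrt 3) (Ioo (1 / Real.sqrt 3) (Real.sqrt 3))) (nhds 0) := by
  have heq : (fun u => (mParam u)⁻¹)
      = fun u => (8 * u ^ 3 - sP u ^ 3) / (8 * u ^ 3 - u ^ 3 * sP u ^ 3) := by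
    funext u
    rw [mParam_eq, inv_div]
  rw [heq]
  set a := 1 / Real.sqrt 3 with hadef
  have h3 := sqrt3_sq
  have h3p := sqrt3_pos
  have hden : 8 * a ^ 3 - a ^ 3 * sP a ^ 3 ≠ 0 := by
    rw [sP_at_a]
    have : 8 * a ^ 3 - a ^ 3 * (2 / Real.sqrt 3) ^ 3
        = a ^ 3 * (8 - 8 / (Real.sqrt 3 ^ 3)) := by ring
    rw [this]
    have h8 : 8 / (Real.sqrt 3 ^ 3) < 8 := by
      rw [div_lt_iff₀ (by positivity)]
      nlinarith
    have hap : 0 < a := by positivity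
    have : 0 < a ^ 3 * (8 - 8 / Real.sqrt 3 ^ 3) := mul_pos (pow_pos hap 3) (by linarith)
    exact ne_of_gt this
  have hc : ContinuousAt (fun u => (8 * u ^ 3 - sP u ^ 3) / (8 * u ^ 3 - u ^ 3 * sP u ^ 3)) a := by
    apply ContinuousAt.div
    · exact (by fun_prop : Continuous fun u : ℝ => 8 * u ^ 3).continuousAt.sub
        ((sP_cont.pow 3).continuousAt)
    · exact ((by fun_prop : Continuous fun u : ℝ => 8 * u ^ 3).sub
        (continuous_pow 3 |>.mul (sP_cont.pow 3))).continuousAt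
    · exact hden
  have hval : (8 * a ^ 3 - sP a ^ 3) / (8 * a ^ 3 - a ^ 3 * sP a ^ 3) = 0 := by
    rw [sP_at_a]
    have : 8 * a ^ 3 - (2 / Real.sqrt 3) ^ 3 = 0 := by
      rw [hadef]; ring
    rw [this, zero_div]
  have := hc.tendsto
  rw [hval] at this
  exact this.mono_left nhdsWithin_le_nhds

lemma G_contAt (q : ℝ → ℝ) (hq : Continuous q) :
    ContinuousAt (G q) (1 / Real.sqrt 3, 0) := by
  have hsc : Continuous (fun p : ℝ × ℝ => sP p.1) := sP_cont.comp continuous_fst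
  have hnum : Continuous (fun p : ℝ × ℝ =>
      4 * p.1 * (1 + p.2) * (2 * p.1 ^ 2 + 2 * p.2) * q p.1) := by fun_prop
  have hden : Continuous (fun p : ℝ × ℝ =>
      (8 * p.2 * p.1 + sP p.1 + p.2 ^ 2 * p.1 * sP p.1) * sP p.1 ^ 4) :=
    ((((continuous_const.mul continuous_snd).mul continuous_fst).add hsc).add
      (((continuous_snd.pow 2).mul continuous_fst).mul hsc)).mul (hsc.pow 4)
  have hne : (8 * (0:ℝ) * (1 / Real.sqrt 3) + sP (1 / Real.sqrt 3) +
      (0:ℝ) ^ 2 * (1 / Real.sqrt 3) * sP (1 / Real.sqrt 3)) * sP (1 / Real.sqrt 3) ^ 4 ≠ 0 := by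
    have := sP_pos (1 / Real.sqrt 3)
    have h : (8 * (0:ℝ) * (1 / Real.sqrt 3) + sP (1 / Real.sqrt 3) +
      (0:ℝ) ^ 2 * (1 / Real.sqrt 3) * sP (1 / Real.sqrt 3)) * sP (1 / Real.sqrt 3) ^ 4
      = sP (1 / Real.sqrt 3) ^ 5 := by ring
    rw [h]; positivity
  exact continuousAt_const.add (hnum.continuousAt.div hden.continuousAt hne)

lemma G_val (q : ℝ → ℝ) :
    G q (1 / Real.sqrt 3, 0) = 1 + 3 / 4 * q (1 / Real.sqrt 3) := by
  have h3 := sqrt3_sq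
  have h3p := sqrt3_pos
  rw [G]
  simp only
  rw [sP_at_a]
  have h3n : Real.sqrt 3 ≠ 0 := h3p.ne'
  field_simp
  ring_nf
  linear_combination (16 * Real.sqrt 3 * q (Real.sqrt 3)⁻¹) * h3

lemma tendsto_left (q : ℝ → ℝ) (hq : Continuous q) :
    Tendsto (fun u => 1 + 2 * (mParam u + 1) * (alphaParam u) ^ 3 * q u /
        (muParam u * (1 + u ^ 2) ^ ((5 : ℝ) / 2)))
      (nhdsWithin (1 / Real.sqrt 3) (Ioo (1 / Real.sqrt 3) (Real.sqrt 3)))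
      (nhds (1 + 3 / 4 * q (1 / Real.sqrt 3))) := by
  have hfst : Tendsto (fun u : ℝ => u)
      (nhdsWithin (1 / Real.sqrt 3) (Ioo (1 / Real.sqrt 3) (Real.sqrt 3)))
      (nhds (1 / Real.sqrt 3)) :=
    tendsto_id.mono_right nhdsWithin_le_nhds
  have hpair : Tendsto (fun u : ℝ => (u, (mParam u)⁻¹))
      (nhdsWithin (1 / Real.sqrt 3) (Ioo (1 / Real.sqrt 3) (Real.sqrt 3)))
      (nhds (1 / Real.sqrt 3, 0)) :=
    hfst.prodMk_nhds tendsto_inv_m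
  have hcomp := ((G_contAt q hq).tendsto).comp hpair
  rw [G_val] at hcomp
  apply hcomp.congr'
  filter_upwards [self_mem_nhdsWithin] with u hu
  exact (phi_eq q hu).symm

lemma sP_at_r : sP (Real.sqrt 3) = 2 := by
  rw [sP, show 1 + Real.sqrt 3 ^ 2 = (2:ℝ) ^ 2 by rw [sqrt3_sq]; norm_num]
  exact Real.sqrt_sq (by norm_num)

lemma sqrt3_gt_one : (1:ℝ) < Real.sqrt 3 := by
  nlinarith [sqrt3_sq, sqrt3_pos]

lemma mParam_contAt : ContinuousAt mParam (Real.sqrt 3) := by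
  have : mParam = fun u => (8 * u ^ 3 - u ^ 3 * sP u ^ 3) / (8 * u ^ 3 - sP u ^ 3) :=
    funext mParam_eq
  rw [this]
  apply ContinuousAt.div
  · exact ((by fun_prop : Continuous fun u : ℝ => 8 * u ^ 3).sub
      ((continuous_pow 3).mul (sP_cont.pow 3))).continuousAt
  · exact ((by fun_prop : Continuous fun u : ℝ => 8 * u ^ 3).sub
      (sP_cont.pow 3)).continuousAt
  · rw [sP_at_r]
    have h1 := sqrt3_gt_one
    have h3 := sqrt3_sq
    nlinarith

lemma mParam_at_r : mParam (Real.sqrt 3) = 0 := by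
  rw [mParam_eq, sP_at_r]
  have : 8 * Real.sqrt 3 ^ 3 - Real.sqrt 3 ^ 3 * 2 ^ 3 = 0 := by ring
  rw [this, zero_div]

lemma alphaParam_contAt : ContinuousAt alphaParam (Real.sqrt 3) := by
  have : alphaParam = fun u => Real.sqrt (2 * mParam u * u ^ 2 + 2) := rfl
  rw [this]
  exact Real.continuous_sqrt.continuousAt.comp
    (((continuousAt_const.mul mParam_contAt).mul (continuousAt_id.pow 2)).add
      continuousAt_const)

lemma alphaParam_at_r : alphaParam (Real.sqrt 3) = Real.sqrt 2 := by
  rw [alphaParam, mParam_at_r]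
  norm_num

lemma muParam_contAt : ContinuousAt muParam (Real.sqrt 3) := by
  have : muParam = fun u => 4 * mParam u * alphaParam u / sP u +
      alphaParam u * (mParam u) ^ 2 / (2 * u) + alphaParam u / 2 := rfl
  rw [this]
  apply ContinuousAt.add
  apply ContinuousAt.add
  · exact ContinuousAt.div ((continuousAt_const.mul mParam_contAt).mul alphaParam_contAt)
      sP_cont.continuousAt (by rw [sP_at_r]; norm_num)
  · exact ContinuousAt.div (alphaParam_contAt.mul (mParam_contAt.pow 2))
      (continuousAt_const.mul continuousAt_id) (by positivity)
  · exact alphaParam_contAt.div_const 2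

lemma muParam_at_r : muParam (Real.sqrt 3) = Real.sqrt 2 / 2 := by
  rw [muParam, mParam_at_r, alphaParam_at_r]
  norm_num

lemma tendsto_right (q : ℝ → ℝ) (hq : Continuous q) :
    Tendsto (fun u => 1 + 2 * (mParam u + 1) * (alphaParam u) ^ 3 * q u /
        (muParam u * (1 + u ^ 2) ^ ((5 : ℝ) / 2)))
      (nhdsWithin (Real.sqrt 3) (Ioo (1 / Real.sqrt 3) (Real.sqrt 3)))
      (nhds (1 + q (Real.sqrt 3) / 4)) := by
  have h2 : Real.sqrt 2 ^ 2 = 2 := Real.sq_sqrt (by norm_num)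
  have h2p : (0:ℝ) < Real.sqrt 2 := Real.sqrt_pos.2 (by norm_num)
  have heq : (fun u => 1 + 2 * (mParam u + 1) * (alphaParam u) ^ 3 * q u /
        (muParam u * (1 + u ^ 2) ^ ((5 : ℝ) / 2)))
      = fun u => 1 + 2 * (mParam u + 1) * (alphaParam u) ^ 3 * q u /
        (muParam u * sP u ^ 5) := by
    funext u; rw [rpow_five_halves]
  rw [heq]
  have hc : ContinuousAt (fun u => 1 + 2 * (mParam u + 1) * (alphaParam u) ^ 3 * q u /
      (muParam u * sP u ^ 5)) (Real.sqrt 3) := by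
    apply continuousAt_const.add
    apply ContinuousAt.div
    · exact (((continuousAt_const.mul (mParam_contAt.add continuousAt_const)).mul
        (alphaParam_contAt.pow 3)).mul hq.continuousAt)
    · exact muParam_contAt.mul (sP_cont.continuousAt.pow 5)
    · rw [muParam_at_r, sP_at_r]; positivity
  have hval : 1 + 2 * (mParam (Real.sqrt 3) + 1) * (alphaParam (Real.sqrt 3)) ^ 3 *
      q (Real.sqrt 3) / (muParam (Real.sqrt 3) * sP (Real.sqrt 3) ^ 5)
      = 1 + q (Real.sqrt 3) / 4 := by
    rw [mParam_at_r, alphaParam_at_r, muParam_at_r, sP_at_r]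
    have hs3 : Real.sqrt 2 ^ 3 = 2 * Real.sqrt 2 := by
      rw [pow_succ, h2]
    rw [hs3]
    field_simp
    ring
  have := hc.tendsto
  rw [hval] at this
  exact this.mono_left nhdsWithin_le_nhds

/-- Limits of `φ₁` and `φ₂` at the endpoints of `(1/√3, √3)`. -/
theorem phi_limits :
    Filter.Tendsto phi1
      (nhdsWithin (1 / Real.sqrt 3) (Set.Ioo (1 / Real.sqrt 3) (Real.sqrt 3)))
      (nhds (9 / 4)) ∧
    Filter.Tendsto phi1
      (nhdsWithin (Real.sqrt 3) (Set.Ioo (1 / Real.sqrt 3) (Real.sqrt 3)))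
      (nhds (3 / 4)) ∧
    Filter.Tendsto phi2
      (nhdsWithin (1 / Real.sqrt 3) (Set.Ioo (1 / Real.sqrt 3) (Real.sqrt 3)))
      (nhds (3 / 4)) ∧
    Filter.Tendsto phi2
      (nhdsWithin (Real.sqrt 3) (Set.Ioo (1 / Real.sqrt 3) (Real.sqrt 3)))
      (nhds (9 / 4)) := by
  have hq1 : Continuous (fun x : ℝ => 2 - x ^ 2) := by fun_prop
  have hq2 : Continuous (fun x : ℝ => 2 * x ^ 2 - 1) := by fun_prop
  have ha2 : (1 / Real.sqrt 3 : ℝ) ^ 2 = 1 / 3 := by rw [div_pow, one_pow, sqrt3_sq]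
  have hr2 : (Real.sqrt 3 : ℝ) ^ 2 = 3 := sqrt3_sq
  refine ⟨?_, ?_, ?_, ?_⟩
  · have h := tendsto_left (fun x => 2 - x ^ 2) hq1
    rw [show (1:ℝ) + 3 / 4 * (2 - (1 / Real.sqrt 3) ^ 2) = 9 / 4 by rw [ha2]; norm_num] at h
    exact h
  · have h := tendsto_right (fun x => 2 - x ^ 2) hq1
    rw [show (1:ℝ) + (2 - Real.sqrt 3 ^ 2) / 4 = 3 / 4 by rw [hr2]; norm_num] at h
    exact h
  · have h := tendsto_left (fun x => 2 * x ^ 2 - 1) hq2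
    rw [show (1:ℝ) + 3 / 4 * (2 * (1 / Real.sqrt 3) ^ 2 - 1) = 3 / 4 by rw [ha2]; norm_num] at h
    exact h
  · have h := tendsto_right (fun x => 2 * x ^ 2 - 1) hq2
    rw [show (1:ℝ) + (2 * Real.sqrt 3 ^ 2 - 1) / 4 = 9 / 4 by rw [hr2]; norm_num] at h
    exact h
end

section
/- The function ψ₁ tends to 3/4 both as u → (1/√3)⁺ and as u → (√3)⁻, and the function ψ₂ tends to 9/4 both as u → (1/√3)⁺ and as u → (√3)⁻ (limits taken within the open interval (1/√3, √3)). -/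
/- ## Auxiliary lemmas -/

lemma rpow_32 {x : ℝ} (hx : 0 ≤ x) : x ^ ((3:ℝ)/2) = x * Real.sqrt x := by
  rw [show (3:ℝ)/2 = (1:ℝ)/2 * 3 by norm_num, Real.rpow_mul hx, ← Real.sqrt_eq_rpow,
    show (3:ℝ) = ((3:ℕ):ℝ) by norm_num, Real.rpow_natCast, pow_succ, Real.sq_sqrt hx]

lemma rpow_52 {x : ℝ} (hx : 0 ≤ x) : x ^ ((5:ℝ)/2) = x ^ 2 * Real.sqrt x := by
  rw [show (5:ℝ)/2 = (1:ℝ)/2 * 5 by norm_num, Real.rpow_mul hx, ← Real.sqrt_eq_rpow,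
    show (5:ℝ) = ((5:ℕ):ℝ) by norm_num, Real.rpow_natCast,
    show Real.sqrt x ^ 5 = (Real.sqrt x ^ 2) ^ 2 * Real.sqrt x by ring, Real.sq_sqrt hx]

lemma basicIoo {u : ℝ} (hu : u ∈ Set.Ioo (1 / Real.sqrt 3) (Real.sqrt 3)) :
    0 < u ∧ 1 < 3 * u ^ 2 ∧ u ^ 2 < 3 := by
  obtain ⟨h1, h2⟩ := hu
  have h3 : (0:ℝ) < Real.sqrt 3 := Real.sqrt_pos.2 (by norm_num)
  have h3s : Real.sqrt 3 ^ 2 = 3 := Real.sq_sqrt (by norm_num)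
  have hu0 : 0 < u := lt_trans (by positivity) h1
  refine ⟨hu0, ?_, ?_⟩
  · have : 1 < u * Real.sqrt 3 := by
      rw [div_lt_iff₀ h3] at h1; linarith
    nlinarith
  · nlinarith

lemma denpos {u : ℝ} (hu : u ∈ Set.Ioo (1 / Real.sqrt 3) (Real.sqrt 3)) :
    0 < 8 * u ^ 3 - (1 + u ^ 2) ^ ((3:ℝ)/2) ∧
    0 < 8 * u ^ 3 - u ^ 3 * (1 + u ^ 2) ^ ((3:ℝ)/2) := by
  obtain ⟨hu0, hl, hr⟩ := basicIoo hu
  have hx : (0:ℝ) ≤ 1 + u ^ 2 := by positivity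
  rw [rpow_32 hx]
  set s := Real.sqrt (1 + u ^ 2) with hs
  have hs0 : 0 < s := Real.sqrt_pos.2 (by positivity)
  have hs2 : s ^ 2 = 1 + u ^ 2 := Real.sq_sqrt hx
  constructor
  · have h1 : s < 2 * u := by nlinarith
    nlinarith
  · have h1 : s < 2 := by nlinarith
    have h2 : (1 + u ^ 2) * s < 8 := by nlinarith
    have h3 : u ^ 3 * ((1 + u ^ 2) * s) < u ^ 3 * 8 :=
      mul_lt_mul_of_pos_left h2 (pow_pos hu0 3)
    linarith

/-- the reciprocal of `mParam`, which extends continuously through `1/√3`. -/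
noncomputable def tFun (u : ℝ) : ℝ :=
  (8 * u ^ 3 - (1 + u ^ 2) ^ ((3:ℝ)/2)) / (8 * u ^ 3 - u ^ 3 * (1 + u ^ 2) ^ ((3:ℝ)/2))

noncomputable def F1 (u : ℝ) : ℝ :=
  1 + 4 * ((2*u^4 + (6*tFun u - 1 - (tFun u)^2)*u^2 + 2*(tFun u)^2) / (1+u^2)^((5:ℝ)/2)
      - tFun u * (u^2/8 + 1/(8*u^3))) /
    (4 * tFun u / Real.sqrt (1+u^2) + 1/(2*u) + (tFun u)^2/2)

noncomputable def F2 (u : ℝ) : ℝ :=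
  1 + 4 * ((-u^4 + (2 - 6*tFun u + 2*(tFun u)^2)*u^2 - (tFun u)^2) / (1+u^2)^((5:ℝ)/2)
      + tFun u * (u^2/4 + 1/(4*u^3))) /
    (4 * tFun u / Real.sqrt (1+u^2) + 1/(2*u) + (tFun u)^2/2)

lemma eqF {u : ℝ} (hu : u ∈ Set.Ioo (1 / Real.sqrt 3) (Real.sqrt 3)) :
    psi1 u = F1 u ∧ psi2 u = F2 u := by
  obtain ⟨hu0, hl, hr⟩ := basicIoo hu
  obtain ⟨hd1, hd2⟩ := denpos hu
  have hm0 : 0 < mParam u := div_pos hd2 hd1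
  have ht : tFun u = (mParam u)⁻¹ := by
    rw [tFun, mParam, inv_div]
  have ha0 : 0 < alphaParam u := Real.sqrt_pos.2 (by positivity)
  have hx : (0:ℝ) ≤ 1 + u ^ 2 := by positivity
  have hs0 : 0 < Real.sqrt (1 + u ^ 2) := Real.sqrt_pos.2 (by positivity)
  set m := mParam u
  set a := alphaParam u
  set s := Real.sqrt (1 + u ^ 2) with hs
  have hμ0 : 0 < muParam u := by
    rw [muParam]; positivity
  rw [psi1, psi2, F1, F2, ht, muParam, rpow_52 hx]
  have hμ' : 4 * m * a / s + a * m ^ 2 / (2 * u) + a / 2 ≠ 0 := by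
    rw [muParam] at hμ0; exact ne_of_gt hμ0
  have hD : 0 < 4 * m⁻¹ / s + 1 / (2 * u) + (m⁻¹) ^ 2 / 2 := by positivity
  rw [show alphaParam u = a from rfl, show mParam u = m from rfl, ← hs]
  constructor <;>
  · field_simp
    ring

/- ## Continuity helpers -/

lemma c32cont {x : ℝ} : ContinuousAt (fun u : ℝ => (1 + u ^ 2) ^ ((3:ℝ)/2)) x :=
  ContinuousAt.rpow_const (by fun_prop) (Or.inr (by norm_num))

lemma c52cont {x : ℝ} : ContinuousAt (fun u : ℝ => (1 + u ^ 2) ^ ((5:ℝ)/2)) x :=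
  ContinuousAt.rpow_const (by fun_prop) (Or.inr (by norm_num))

lemma csqrtcont {x : ℝ} : ContinuousAt (fun u : ℝ => Real.sqrt (1 + u ^ 2)) x :=
  Real.continuous_sqrt.continuousAt.comp (by fun_prop)

/- ## Right endpoint: values at √3 -/

lemma right_vals :
    mParam (Real.sqrt 3) = 0 ∧ muParam (Real.sqrt 3) = Real.sqrt 2 / 2 ∧
      psi1 (Real.sqrt 3) = 3/4 ∧ psi2 (Real.sqrt 3) = 9/4 := by
  have h3s : Real.sqrt 3 ^ 2 = 3 := Real.sq_sqrt (by norm_num)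
  have h3p : (0:ℝ) < Real.sqrt 3 := Real.sqrt_pos.2 (by norm_num)
  have h14 : (1 : ℝ) + Real.sqrt 3 ^ 2 = 4 := by rw [h3s]; norm_num
  have hs4 : Real.sqrt (1 + Real.sqrt 3 ^ 2) = 2 := by
    rw [h14, show (4:ℝ) = 2^2 by norm_num, Real.sqrt_sq (by norm_num)]
  have h52 : ((1 : ℝ) + Real.sqrt 3 ^ 2) ^ ((5:ℝ)/2) = 32 := by
    rw [rpow_52 (by positivity), hs4, h14]; norm_num
  have h32 : ((1 : ℝ) + Real.sqrt 3 ^ 2) ^ ((3:ℝ)/2) = 8 := by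
    rw [rpow_32 (by positivity), hs4, h14]; norm_num
  have hm : mParam (Real.sqrt 3) = 0 := by
    rw [mParam, h32, show 8 * Real.sqrt 3 ^ 3 - Real.sqrt 3 ^ 3 * 8 = 0 by ring, zero_div]
  have ha : alphaParam (Real.sqrt 3) = Real.sqrt 2 := by
    rw [alphaParam, hm]; norm_num
  have hμ : muParam (Real.sqrt 3) = Real.sqrt 2 / 2 := by
    rw [muParam, hm, ha]; ring
  have h2p : (0:ℝ) < Real.sqrt 2 := Real.sqrt_pos.2 (by norm_num)
  refine ⟨hm, hμ, ?_, ?_⟩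
  · rw [psi1, hm, ha, hμ, h52, h3s]
    field_simp
    ring
  · rw [psi2, hm, ha, hμ, h52, h3s]
    field_simp
    ring

lemma right_cont : ContinuousAt psi1 (Real.sqrt 3) ∧ ContinuousAt psi2 (Real.sqrt 3) := by
  have h3s : Real.sqrt 3 ^ 2 = 3 := Real.sq_sqrt (by norm_num)
  have h3p : (0:ℝ) < Real.sqrt 3 := Real.sqrt_pos.2 (by norm_num)
  have h3g : (1:ℝ) < Real.sqrt 3 := by nlinarith
  have h14 : (1 : ℝ) + Real.sqrt 3 ^ 2 = 4 := by rw [h3s]; norm_num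
  have hs4 : Real.sqrt (1 + Real.sqrt 3 ^ 2) = 2 := by
    rw [h14, show (4:ℝ) = 2^2 by norm_num, Real.sqrt_sq (by norm_num)]
  have h52 : ((1 : ℝ) + Real.sqrt 3 ^ 2) ^ ((5:ℝ)/2) = 32 := by
    rw [rpow_52 (by positivity), hs4, h14]; norm_num
  have h32 : ((1 : ℝ) + Real.sqrt 3 ^ 2) ^ ((3:ℝ)/2) = 8 := by
    rw [rpow_32 (by positivity), hs4, h14]; norm_num
  obtain ⟨hm, hμval, _, _⟩ := right_vals
  have h2p : (0:ℝ) < Real.sqrt 2 := Real.sqrt_pos.2 (by norm_num)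
  have hp3 : ContinuousAt (fun u : ℝ => u ^ 3) (Real.sqrt 3) := (continuous_pow 3).continuousAt
  -- m continuous
  have hmden : 8 * Real.sqrt 3 ^ 3 - (1 + Real.sqrt 3 ^ 2) ^ ((3:ℝ)/2) ≠ 0 := by
    rw [h32]
    have : Real.sqrt 3 ^ 3 = 3 * Real.sqrt 3 := by
      rw [pow_succ, h3s]
    rw [this]; nlinarith
  have cm : ContinuousAt mParam (Real.sqrt 3) := by
    apply ContinuousAt.div
    · exact (hp3.const_mul 8).sub (hp3.mul c32cont)
    · exact (hp3.const_mul 8).sub c32cont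
    · exact hmden
  have ca : ContinuousAt alphaParam (Real.sqrt 3) := by
    apply Real.continuous_sqrt.continuousAt.comp
    exact (((cm.const_mul 2).mul (continuous_pow 2).continuousAt).add continuousAt_const)
  have cμ : ContinuousAt muParam (Real.sqrt 3) := by
    apply ContinuousAt.add
    apply ContinuousAt.add
    · exact ((cm.const_mul 4).mul ca).div csqrtcont (by rw [hs4]; norm_num)
    · exact (ca.mul (cm.pow 2)).div (continuousAt_id.const_mul 2) (by positivity)
    · exact ca.div_const 2
  have hμne : muParam (Real.sqrt 3) ≠ 0 := by
    rw [hμval]; positivity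
  have c52ne : ((1:ℝ) + Real.sqrt 3 ^ 2) ^ ((5:ℝ)/2) ≠ 0 := by rw [h52]; norm_num
  have c8u3 : (8 : ℝ) * Real.sqrt 3 ^ 3 ≠ 0 := by positivity
  have cp2 : ContinuousAt (fun u : ℝ => u ^ 2) (Real.sqrt 3) := (continuous_pow 2).continuousAt
  have cp4 : ContinuousAt (fun u : ℝ => u ^ 4) (Real.sqrt 3) := (continuous_pow 4).continuousAt
  have cfrac : ContinuousAt (fun u => 4 * alphaParam u / muParam u) (Real.sqrt 3) :=
    (ca.const_mul 4).div cμ hμne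
  constructor
  · unfold psi1
    exact continuousAt_const.add (cfrac.mul
      ((((((((cm.pow 2).const_mul 2).mul cp4).add
          ((((cm.const_mul 6).sub (cm.pow 2)).sub continuousAt_const).mul cp2)).add
          continuousAt_const).div c52cont c52ne).sub
        ((cm.mul cp2).div_const 8)).sub
        (cm.div (hp3.const_mul 8) c8u3)))
  · unfold psi2
    exact continuousAt_const.add (cfrac.mul
      (((((((cm.pow 2).neg.mul cp4).add
          (((((cm.pow 2).const_mul 2).sub (cm.const_mul 6)).add continuousAt_const).mul cp2)).sub
          continuousAt_const).div c52cont c52ne).add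
        ((cm.mul cp2).div_const 4)).add
        (cm.div (hp3.const_mul 4) (by positivity))))

/- ## Left endpoint: values at 1/√3 -/

lemma left_vals :
    tFun (1 / Real.sqrt 3) = 0 ∧ F1 (1 / Real.sqrt 3) = 3/4 ∧ F2 (1 / Real.sqrt 3) = 9/4 := by
  have h3s : Real.sqrt 3 ^ 2 = 3 := Real.sq_sqrt (by norm_num)
  have h3p : (0:ℝ) < Real.sqrt 3 := Real.sqrt_pos.2 (by norm_num)
  have h3ne : Real.sqrt 3 ≠ 0 := ne_of_gt h3p
  have h14 : (1 : ℝ) + (1 / Real.sqrt 3) ^ 2 = 4/3 := by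
    rw [div_pow, one_pow, h3s]; norm_num
  have hs43 : Real.sqrt (4/3) = 2 * Real.sqrt 3 / 3 := by
    rw [show (4:ℝ)/3 = 2^2/3 by norm_num, Real.sqrt_div (by norm_num),
      Real.sqrt_sq (by norm_num), eq_div_iff (by norm_num : (3:ℝ) ≠ 0)]
    field_simp
    linear_combination (-1) * h3s
  have h32 : ((1 : ℝ) + (1 / Real.sqrt 3) ^ 2) ^ ((3:ℝ)/2) = 8 * Real.sqrt 3 / 9 := by
    rw [h14, rpow_32 (by norm_num), hs43]; ring
  have h52 : ((1 : ℝ) + (1 / Real.sqrt 3) ^ 2) ^ ((5:ℝ)/2) = 32 * Real.sqrt 3 / 27 := by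
    rw [h14, rpow_52 (by norm_num), hs43]; ring
  have hcube : (1 / Real.sqrt 3) ^ 3 = Real.sqrt 3 / 9 := by
    rw [div_pow, one_pow, pow_succ, h3s, eq_div_iff (by norm_num : (9:ℝ) ≠ 0)]
    field_simp
    linear_combination (-3) * h3s
  have ht : tFun (1 / Real.sqrt 3) = 0 := by
    rw [tFun, h32, hcube, show 8 * (Real.sqrt 3 / 9) - 8 * Real.sqrt 3 / 9 = 0 by ring, zero_div]
  have hsq : Real.sqrt (1 + (1 / Real.sqrt 3) ^ 2) = 2 * Real.sqrt 3 / 3 := by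
    rw [h14, hs43]
  have h2v : ((1:ℝ) / Real.sqrt 3) ^ 2 = 1/3 := by
    rw [div_pow, one_pow, h3s]
  have h4v : ((1:ℝ) / Real.sqrt 3) ^ 4 = 1/9 := by
    rw [div_pow, one_pow, show (Real.sqrt 3:ℝ)^4 = (Real.sqrt 3^2)^2 by ring, h3s]; norm_num
  refine ⟨ht, ?_, ?_⟩
  · rw [F1, ht, h52, hcube, hsq, h2v, h4v]
    field_simp
    linear_combination (6912 : ℝ) * h3s
  · rw [F2, ht, h52, hcube, hsq, h2v, h4v]
    field_simp
    linear_combination (-4320 : ℝ) * h3s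

lemma left_cont : ContinuousAt F1 (1 / Real.sqrt 3) ∧ ContinuousAt F2 (1 / Real.sqrt 3) := by
  have h3s : Real.sqrt 3 ^ 2 = 3 := Real.sq_sqrt (by norm_num)
  have h3p : (0:ℝ) < Real.sqrt 3 := Real.sqrt_pos.2 (by norm_num)
  have hap : (0:ℝ) < 1 / Real.sqrt 3 := by positivity
  have h14 : (1 : ℝ) + (1 / Real.sqrt 3) ^ 2 = 4/3 := by
    rw [div_pow, one_pow, h3s]; norm_num
  have h32lt : ((1 : ℝ) + (1 / Real.sqrt 3) ^ 2) ^ ((3:ℝ)/2) < 8 := by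
    rw [rpow_32 (by positivity), h14]
    have : Real.sqrt (4/3) < 2 := by
      rw [show (2:ℝ) = Real.sqrt 4 from by
        rw [show (4:ℝ) = 2^2 by norm_num, Real.sqrt_sq (by norm_num)]]
      exact Real.sqrt_lt_sqrt (by norm_num) (by norm_num)
    nlinarith [Real.sqrt_nonneg (4/3 : ℝ)]
  have htden : 8 * (1 / Real.sqrt 3) ^ 3 -
      (1 / Real.sqrt 3) ^ 3 * ((1 : ℝ) + (1 / Real.sqrt 3) ^ 2) ^ ((3:ℝ)/2) ≠ 0 := by
    have hc : (0:ℝ) < (1 / Real.sqrt 3) ^ 3 := by positivity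
    nlinarith [mul_lt_mul_of_pos_left h32lt hc]
  have hp3 : ContinuousAt (fun u : ℝ => u ^ 3) (1 / Real.sqrt 3) := (continuous_pow 3).continuousAt
  have ct : ContinuousAt tFun (1 / Real.sqrt 3) := by
    apply ContinuousAt.div
    · exact (hp3.const_mul 8).sub c32cont
    · exact (hp3.const_mul 8).sub (hp3.mul c32cont)
    · exact htden
  obtain ⟨ht0, _, _⟩ := left_vals
  have hDne : 4 * tFun (1 / Real.sqrt 3) / Real.sqrt (1 + (1 / Real.sqrt 3) ^ 2) +
      1 / (2 * (1 / Real.sqrt 3)) + (tFun (1 / Real.sqrt 3)) ^ 2 / 2 ≠ 0 := by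
    rw [ht0]
    positivity
  have c52ne : ((1:ℝ) + (1 / Real.sqrt 3) ^ 2) ^ ((5:ℝ)/2) ≠ 0 := by
    have : (0:ℝ) < ((1:ℝ) + (1 / Real.sqrt 3) ^ 2) ^ ((5:ℝ)/2) := by
      apply Real.rpow_pos_of_pos; positivity
    exact ne_of_gt this
  have c8u3 : (8 : ℝ) * (1 / Real.sqrt 3) ^ 3 ≠ 0 := by positivity
  have cp2 : ContinuousAt (fun u : ℝ => u ^ 2) (1 / Real.sqrt 3) := (continuous_pow 2).continuousAt
  have cp4 : ContinuousAt (fun u : ℝ => u ^ 4) (1 / Real.sqrt 3) := (continuous_pow 4).continuousAt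
  have cD : ContinuousAt
      (fun u => 4 * tFun u / Real.sqrt (1 + u ^ 2) + 1 / (2 * u) + (tFun u) ^ 2 / 2)
      (1 / Real.sqrt 3) := by
    apply ContinuousAt.add
    apply ContinuousAt.add
    · exact (ct.const_mul 4).div csqrtcont (by
        rw [h14]; positivity)
    · exact ContinuousAt.div continuousAt_const (continuousAt_id.const_mul 2)
        (by positivity)
    · exact (ct.pow 2).div_const 2
  constructor
  · unfold F1
    exact continuousAt_const.add (ContinuousAt.div
      ((((((cp4.const_mul 2).add
          ((((ct.const_mul 6).sub continuousAt_const).sub (ct.pow 2)).mul cp2)).add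
          ((ct.pow 2).const_mul 2)).div c52cont c52ne).sub
        (ct.mul ((cp2.div_const 8).add
          (ContinuousAt.div continuousAt_const (hp3.const_mul 8) c8u3)))).const_mul 4)
      cD hDne)
  · unfold F2
    have hN2 : ContinuousAt (fun u : ℝ =>
        (-u^4 + (2 - 6*tFun u + 2*(tFun u)^2)*u^2 - (tFun u)^2) / (1+u^2)^((5:ℝ)/2)) (1/Real.sqrt 3) :=
      ContinuousAt.div
        ((cp4.neg.add
          (((continuousAt_const.sub (ct.const_mul 6)).add ((ct.pow 2).const_mul 2)).mul cp2)).sub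
          (ct.pow 2)) c52cont c52ne
    have hT2 : ContinuousAt (fun u : ℝ => tFun u * (u^2/4 + 1/(4*u^3))) (1/Real.sqrt 3) :=
      ct.mul ((cp2.div_const 4).add
        (ContinuousAt.div continuousAt_const (hp3.const_mul 4) (by positivity)))
    exact continuousAt_const.add (ContinuousAt.div ((hN2.add hT2).const_mul 4) cD hDne)

/- ## Main theorem -/

/-- Limits of `ψ₁` and `ψ₂` at the endpoints of `(1/√3, √3)`. -/
theorem psi_limits :
    Filter.Tendsto psi1
      (nhdsWithin (1 / Real.sqrt 3) (Set.Ioo (1 / Real.sqrt 3) (Real.sqrt 3)))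
      (nhds (3 / 4)) ∧
    Filter.Tendsto psi1
      (nhdsWithin (Real.sqrt 3) (Set.Ioo (1 / Real.sqrt 3) (Real.sqrt 3)))
      (nhds (3 / 4)) ∧
    Filter.Tendsto psi2
      (nhdsWithin (1 / Real.sqrt 3) (Set.Ioo (1 / Real.sqrt 3) (Real.sqrt 3)))
      (nhds (9 / 4)) ∧
    Filter.Tendsto psi2
      (nhdsWithin (Real.sqrt 3) (Set.Ioo (1 / Real.sqrt 3) (Real.sqrt 3)))
      (nhds (9 / 4)) := by
  obtain ⟨ht0, hF1, hF2⟩ := left_vals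
  obtain ⟨hm0, hmu0, hp1, hp2⟩ := right_vals
  obtain ⟨cF1, cF2⟩ := left_cont
  obtain ⟨cp1, cp2⟩ := right_cont
  have heq1 : F1 =ᶠ[nhdsWithin (1 / Real.sqrt 3) (Set.Ioo (1 / Real.sqrt 3) (Real.sqrt 3))] psi1 :=
    eventually_mem_nhdsWithin.mono fun u hu => ((eqF hu).1).symm
  have heq2 : F2 =ᶠ[nhdsWithin (1 / Real.sqrt 3) (Set.Ioo (1 / Real.sqrt 3) (Real.sqrt 3))] psi2 :=
    eventually_mem_nhdsWithin.mono fun u hu => ((eqF hu).2).symm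
  refine ⟨?_, ?_, ?_, ?_⟩
  · refine Filter.Tendsto.congr' heq1 ?_
    rw [← hF1]
    exact (cF1.continuousWithinAt).tendsto
  · rw [← hp1]
    exact (cp1.continuousWithinAt).tendsto
  · refine Filter.Tendsto.congr' heq2 ?_
    rw [← hF2]
    exact (cF2.continuousWithinAt).tendsto
  · rw [← hp2]
    exact (cp2.continuousWithinAt).tendsto
end

section
/- For every u in the open interval (1/√3, √3), the quantity 4 − φ₁(u) − φ₂(u) satisfies (−2 + 4√2)/7 ≤ 4 − φ₁(u) − φ₂(u) ≤ 1. -/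
set_option maxHeartbeats 1600000


lemma keyXY (x y r : ℝ) (hx : 2 ≤ x) (hx16 : 3*x^2 ≤ 16) (hy : y^2 = x^2 + 2*x)
    (hy0 : 0 < y) (hr : r^2 = 2) (hr0 : 0 < r) :
    7 * ((8*x^7 - 32*x^5 + 16*x^4 + 16*x^3 + 512*x) +
        (-x^6 + x^5 + x^4 - 128*x^3 + 128*x^2 + 64*x) * y) ≤
    (9 - 4*r) * ((512*x - 8*x^4) + (x^6 - x^5 - x^4 - 64*x^3 + 64*x^2 + 64*x) * y) := by
  have hrlb : (1414:ℝ)/1000 ≤ r := by nlinarith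
  have hrub : r ≤ (1415:ℝ)/1000 := by nlinarith
  have ht : (0:ℝ) ≤ x - 2 := by linarith
  have hxu : x ≤ (4619:ℝ)/2000 := by nlinarith
  have hrx : (r*x)^2 = 2*x^2 := by rw [mul_pow, hr]
  have hrxpos : 0 < r*x := by nlinarith
  have hyrx : y ≤ r*x := by nlinarith [hrx, hy0, hrxpos]
  have hy2r : 2*r ≤ y := by nlinarith [hy0, hr0]
  have hB : (0:ℝ) ≤ (128*x - 320*x^2 + 320*x^3 - 16*x^4 - 16*x^5 + 16*x^6)
      + r * (-256*x - 256*x^2 + 256*x^3 + 4*x^4 + 4*x^5 - 4*x^6) := by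
    nlinarith [mul_nonneg (by linarith : (0:ℝ) ≤ 3968 + 1472*r) ht,
      mul_nonneg (by linarith : (0:ℝ) ≤ 3776 + 736*r) (mul_nonneg ht ht),
      mul_nonneg (by linarith : (0:ℝ) ≤ 2112 - 192*r) (pow_nonneg ht 3),
      mul_nonneg (by linarith : (0:ℝ) ≤ 784 - 196*r) (pow_nonneg ht 4),
      mul_nonneg (by linarith : (0:ℝ) ≤ 176 - 44*r) (pow_nonneg ht 5),
      mul_nonneg (by linarith : (0:ℝ) ≤ 16 - 4*r) (pow_nonneg ht 6)]
  have hK2 : (0:ℝ) ≤ r*(x+2)*((896*r)*x + (512+768*r)*x^2 + (-200+64*r)*x^3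
        + (-16+32*r)*x^4 + (-128+32*r)*x^5 - 56*x^6)
      + (x+4)*((128*x - 320*x^2 + 320*x^3 - 16*x^4 - 16*x^5 + 16*x^6)
        + r * (-256*x - 256*x^2 + 256*x^3 + 4*x^4 + 4*x^5 - 4*x^6)) := by
    have ht1 : x - 2 ≤ (619:ℝ)/2000 := by linarith
    have hq : (0:ℝ) ≤ 619/2000 - (x-2) := by linarith
    have hp2 : (0:ℝ) ≤ (619/2000)*(x-2) - (x-2)^2 := by nlinarith [mul_nonneg hq ht]
    have hp3 : (0:ℝ) ≤ (619/2000)^2*(x-2) - (x-2)^3 := by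
      nlinarith [mul_nonneg hq (mul_nonneg ht ht), hp2]
    have hp4 : (0:ℝ) ≤ (619/2000)^3*(x-2) - (x-2)^4 := by
      nlinarith [mul_nonneg hq (pow_nonneg ht 3), hp3]
    have hp5 : (0:ℝ) ≤ (619/2000)^4*(x-2) - (x-2)^5 := by
      nlinarith [mul_nonneg hq (pow_nonneg ht 4), hp4]
    have hp6 : (0:ℝ) ≤ (619/2000)^5*(x-2) - (x-2)^6 := by
      nlinarith [mul_nonneg hq (pow_nonneg ht 5), hp5]
    have hp7 : (0:ℝ) ≤ (619/2000)^6*(x-2) - (x-2)^7 := by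
      nlinarith [mul_nonneg hq (pow_nonneg ht 6), hp6]
    nlinarith [mul_nonneg (by linarith : (0:ℝ) ≤ -(79104:ℝ) + 114976*r) hp2,
      mul_nonneg (by linarith : (0:ℝ) ≤ -(38208:ℝ) + 82800*r) hp3,
      mul_nonneg (by linarith : (0:ℝ) ≤ -(12832:ℝ) + 34400*r) hp4,
      mul_nonneg (by linarith : (0:ℝ) ≤ -(2800:ℝ) + 8316*r) hp5,
      mul_nonneg (by linarith : (0:ℝ) ≤ -(336:ℝ) + 1092*r) hp6,
      mul_nonneg (by linarith : (0:ℝ) ≤ -(16:ℝ) + 60*r) hp7,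
      mul_nonneg (by linarith : (0:ℝ) ≤ r - 1414/1000) ht,
      mul_nonneg (by linarith : (0:ℝ) ≤ 1415/1000 - r) ht,
      ht, ht1]
  have hE : (0:ℝ) ≤ (9 - 4*r) * ((512*x - 8*x^4) + (x^6 - x^5 - x^4 - 64*x^3 + 64*x^2 + 64*x) * y)
      - 7 * ((8*x^7 - 32*x^5 + 16*x^4 + 16*x^3 + 512*x) +
        (-x^6 + x^5 + x^4 - 128*x^3 + 128*x^2 + 64*x) * y) := by
    rcases le_or_gt 0 ((896*r)*x + (512+768*r)*x^2 + (-200+64*r)*x^3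
        + (-16+32*r)*x^4 + (-128+32*r)*x^5 - 56*x^6) with hCt | hCt
    · have id1 : (9 - 4*r) * ((512*x - 8*x^4) + (x^6 - x^5 - x^4 - 64*x^3 + 64*x^2 + 64*x) * y)
          - 7 * ((8*x^7 - 32*x^5 + 16*x^4 + 16*x^3 + 512*x) +
            (-x^6 + x^5 + x^4 - 128*x^3 + 128*x^2 + 64*x) * y)
          = (x-2) * ((896*r)*x + (512+768*r)*x^2 + (-200+64*r)*x^3
            + (-16+32*r)*x^4 + (-128+32*r)*x^5 - 56*x^6)
          + ((128*x - 320*x^2 + 320*x^3 - 16*x^4 - 16*x^5 + 16*x^6)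
            + r * (-256*x - 256*x^2 + 256*x^3 + 4*x^4 + 4*x^5 - 4*x^6)) * (y - 2*r) := by
        linear_combination (-512*x - 512*x^2 + 512*x^3 + 8*x^4 + 8*x^5 - 8*x^6) * hr
      rw [id1]
      have h1 := mul_nonneg ht hCt
      have h2 := mul_nonneg hB (by linarith : (0:ℝ) ≤ y - 2*r)
      linarith
    · have hQ : (0:ℝ) ≤ ((896*r)*x + (512+768*r)*x^2 + (-200+64*r)*x^3
          + (-16+32*r)*x^4 + (-128+32*r)*x^5 - 56*x^6) * (y + 2*r)
          + ((128*x - 320*x^2 + 320*x^3 - 16*x^4 - 16*x^5 + 16*x^6)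
            + r * (-256*x - 256*x^2 + 256*x^3 + 4*x^4 + 4*x^5 - 4*x^6)) * (x+4) := by
        have h3 := mul_nonneg (by linarith : (0:ℝ) ≤ -((896*r)*x + (512+768*r)*x^2 + (-200+64*r)*x^3
          + (-16+32*r)*x^4 + (-128+32*r)*x^5 - 56*x^6)) (by linarith : (0:ℝ) ≤ r*x - y)
        nlinarith [hK2, h3]
      have id2 : (y + 2*r) * ((9 - 4*r) * ((512*x - 8*x^4) + (x^6 - x^5 - x^4 - 64*x^3 + 64*x^2 + 64*x) * y)
          - 7 * ((8*x^7 - 32*x^5 + 16*x^4 + 16*x^3 + 512*x) +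
            (-x^6 + x^5 + x^4 - 128*x^3 + 128*x^2 + 64*x) * y))
          = (x-2) * (((896*r)*x + (512+768*r)*x^2 + (-200+64*r)*x^3
            + (-16+32*r)*x^4 + (-128+32*r)*x^5 - 56*x^6) * (y + 2*r)
          + ((128*x - 320*x^2 + 320*x^3 - 16*x^4 - 16*x^5 + 16*x^6)
            + r * (-256*x - 256*x^2 + 256*x^3 + 4*x^4 + 4*x^5 - 4*x^6)) * (x+4)) := by
        linear_combination ((128*x - 320*x^2 + 320*x^3 - 16*x^4 - 16*x^5 + 16*x^6)
            + r * (-256*x - 256*x^2 + 256*x^3 + 4*x^4 + 4*x^5 - 4*x^6)) * hy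
          + ((-512*x + 1280*x^2 - 1280*x^3 + 64*x^4 + 64*x^5 - 64*x^6)
            + y*(-512*x - 512*x^2 + 512*x^3 + 8*x^4 + 8*x^5 - 8*x^6)) * hr
      have h4 := mul_nonneg ht hQ
      rw [← id2] at h4
      have hs : (0:ℝ) < y + 2*r := by linarith
      nlinarith [h4, hs]
  linarith

lemma keyUS (u s r : ℝ) (hu0 : 0 < u) (hs0 : 0 < s) (hs2 : s^2 = 1+u^2)
    (h31 : 1 < 3*u^2) (h3u : u^2 < 3) (hr : r^2 = 2) (hr0 : 0 < r) :
    7*((u^3*(8-s^3))^2*(8*u^3-s^3) + u*(8*u^3-s^3)^2*(8-s^3)) ≤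
    (9-4*r)*(8*u*s^2*(u^3*(8-s^3))*(8*u^3-s^3) + s^3*(u^3*(8-s^3))^2 + u*s^3*(8*u^3-s^3)^2) := by
  have hu : u ≠ 0 := ne_of_gt hu0
  have hu2 : (0:ℝ) < u^2 := by positivity
  have hx : 2 ≤ (1+u^2)/u := by
    rw [le_div_iff₀ hu0]; nlinarith [sq_nonneg (u-1)]
  have hx16 : 3*((1+u^2)/u)^2 ≤ 16 := by
    rw [div_pow, ← mul_div_assoc, div_le_iff₀ hu2]
    nlinarith [mul_nonneg (by linarith : (0:ℝ) ≤ 3*u^2-1) (by linarith : (0:ℝ) ≤ 3-u^2)]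
  have hy : (s*(u+1)/u)^2 = ((1+u^2)/u)^2 + 2*((1+u^2)/u) := by
    field_simp
    linear_combination (u+1)^2 * hs2
  have hy0 : 0 < s*(u+1)/u := div_pos (mul_pos hs0 (by linarith)) hu0
  have hk := keyXY ((1+u^2)/u) (s*(u+1)/u) r hx hx16 hy hy0 hr hr0
  have h8 : (0:ℝ) ≤ u^8 := by positivity
  have hb := mul_le_mul_of_nonneg_left hk h8
  have eL : u^8 * (7 * ((8*((1+u^2)/u)^7 - 32*((1+u^2)/u)^5 + 16*((1+u^2)/u)^4 + 16*((1+u^2)/u)^3 + 512*((1+u^2)/u)) +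
        (-((1+u^2)/u)^6 + ((1+u^2)/u)^5 + ((1+u^2)/u)^4 - 128*((1+u^2)/u)^3 + 128*((1+u^2)/u)^2 + 64*((1+u^2)/u)) * (s*(u+1)/u)))
      = 7*((u^3*(8-s^3))^2*(8*u^3-s^3) + u*(8*u^3-s^3)^2*(8-s^3)) := by
    field_simp
    linear_combination ((-8) + (1)*s^1 + (-8)*s^2 + (1)*s^3 + (-8)*s^4 + (1)*s^5 + (1)*s^7 + (-16)*u^2 + (3)*u^2*s^1 + (-8)*u^2*s^2 + (2)*u^2*s^3 + (1)*u^2*s^5 + (-16)*u^3 + (128)*u^3*s^1 + (-16)*u^3*s^2 + (-16)*u^3*s^4 + (-8)*u^4 + (3)*u^4*s^1 + (1)*u^4*s^3 + (-48)*u^5 + (65)*u^5*s^1 + (-32)*u^5*s^2 + (1)*u^5*s^3 + (-16)*u^5*s^4 + (1)*u^5*s^5 + (1)*u^5*s^7 + (65)*u^6*s^1 + (-48)*u^7 + (3)*u^7*s^1 + (-16)*u^7*s^2 + (2)*u^7*s^3 + (1)*u^7*s^5 + (-8)*u^8 + (128)*u^8*s^1 + (-8)*u^8*s^2 + (-8)*u^8*s^4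 + (-16)*u^9 + (3)*u^9*s^1 + (1)*u^9*s^3 + (-16)*u^10 + (-8)*u^10*s^2 + (1)*u^11*s^1 + (-8)*u^12) * hs2
  have eR : u^8 * ((9 - 4*r) * ((512*((1+u^2)/u) - 8*((1+u^2)/u)^4) +
        (((1+u^2)/u)^6 - ((1+u^2)/u)^5 - ((1+u^2)/u)^4 - 64*((1+u^2)/u)^3 + 64*((1+u^2)/u)^2 + 64*((1+u^2)/u)) * (s*(u+1)/u)))
      = (9-4*r)*(8*u*s^2*(u^3*(8-s^3))*(8*u^3-s^3) + s^3*(u^3*(8-s^3))^2 + u*s^3*(8*u^3-s^3)^2) := by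
    field_simp
    linear_combination ((-9)*s^1 + (4)*s^1*r^1 + (-9)*s^3 + (4)*s^3*r^1 + (-9)*s^5 + (4)*s^5*r^1 + (-9)*s^7 + (4)*s^7*r^1 + (-27)*u^2*s^1 + (12)*u^2*s^1*r^1 + (-18)*u^2*s^3 + (8)*u^2*s^3*r^1 + (-9)*u^2*s^5 + (4)*u^2*s^5*r^1 + (72)*u^3 + (-32)*u^3*r^1 + (576)*u^3*s^1 + (-256)*u^3*s^1*r^1 + (72)*u^3*s^2 + (-32)*u^3*s^2*r^1 + (576)*u^3*s^3 + (-256)*u^3*s^3*r^1 + (72)*u^3*s^4 + (-32)*u^3*s^4*r^1 + (-72)*u^3*s^6 + (32)*u^3*s^6*r^1 + (-27)*u^4*s^1 + (12)*u^4*s^1*r^1 + (-9)*u^4*s^3 + (4)*u^4*s^3*r^1 + (216)*u^5 + (-96)*u^5*r^1 + (-9)*u^5*s^1 + (4)*u^5*s^1*r^1 + (144)*u^5*s^2 + (-64)*u^5*s^2*r^1 + (-9)*u^5*s^3 + (4)*u^5*s^3*r^1 + (72)*u^5*s^4 + (-32)*u^5*s^4*r^1 + (-9)*u^5*s^5 +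 (4)*u^5*s^5*r^1 + (-9)*u^5*s^7 + (4)*u^5*s^7*r^1 + (-4608)*u^6 + (2048)*u^6*r^1 + (-9)*u^6*s^1 + (4)*u^6*s^1*r^1 + (576)*u^6*s^3 + (-256)*u^6*s^3*r^1 + (216)*u^7 + (-96)*u^7*r^1 + (-27)*u^7*s^1 + (12)*u^7*s^1*r^1 + (72)*u^7*s^2 + (-32)*u^7*s^2*r^1 + (-18)*u^7*s^3 + (8)*u^7*s^3*r^1 + (-9)*u^7*s^5 + (4)*u^7*s^5*r^1 + (576)*u^8*s^1 + (-256)*u^8*s^1*r^1 + (72)*u^9 + (-32)*u^9*r^1 + (-27)*u^9*s^1 + (12)*u^9*s^1*r^1 + (-9)*u^9*s^3 + (4)*u^9*s^3*r^1 + (-9)*u^11*s^1 + (4)*u^11*s^1*r^1) * hs2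
  linarith [hb, eL, eR]

/-- Bounds for `4 - φ₁(u) - φ₂(u)` on `(1/√3, √3)`. -/
theorem four_sub_phi_bounds (u : ℝ) (hu1 : 1 / Real.sqrt 3 < u) (hu2 : u < Real.sqrt 3) :
    (-2 + 4 * Real.sqrt 2) / 7 ≤ 4 - phi1 u - phi2 u ∧ 4 - phi1 u - phi2 u ≤ 1 := by
  have h3 : (0:ℝ) < Real.sqrt 3 := by positivity
  have hs3 : (Real.sqrt 3)^2 = 3 := Real.sq_sqrt (by norm_num)
  have hu0 : 0 < u := lt_trans (by positivity) hu1
  have h1a : 1 < u * Real.sqrt 3 := by rw [div_lt_iff₀ h3] at hu1; linarith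
  have h31 : 1 < 3*u^2 := by nlinarith [h1a, hs3, mul_pos hu0 h3]
  have h3u : u^2 < 3 := by nlinarith [hu2, hu0, hs3]
  have h0 : (0:ℝ) ≤ 1 + u^2 := by positivity
  set s : ℝ := Real.sqrt (1 + u ^ 2) with hsdef
  have hs0 : 0 < s := Real.sqrt_pos.mpr (by positivity)
  have hs2 : s^2 = 1+u^2 := Real.sq_sqrt h0
  have h32 : (1 + u ^ 2) ^ ((3:ℝ)/2) = s^3 := by
    rw [hsdef, show ((3:ℝ)/2) = (1/2)*(3:ℕ) by norm_num, Real.rpow_mul h0, Real.rpow_natCast,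
      ← Real.sqrt_eq_rpow]
  have h52 : (1 + u ^ 2) ^ ((5:ℝ)/2) = s^5 := by
    rw [hsdef, show ((5:ℝ)/2) = (1/2)*(5:ℕ) by norm_num, Real.rpow_mul h0, Real.rpow_natCast,
      ← Real.sqrt_eq_rpow]
  have hslt : s < 2*u := by nlinarith [hs2, h31, hs0, hu0]
  have hD : 0 < 8*u^3 - s^3 := by
    nlinarith [mul_pos (sub_pos.mpr hslt) (by positivity : (0:ℝ) < (2*u)^2 + 2*u*s + s^2)]
  have hslt2 : s < 2 := by nlinarith [hs2, h3u, hs0]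
  have h8s : 0 < 8 - s^3 := by
    nlinarith [mul_pos (sub_pos.mpr hslt2) (by positivity : (0:ℝ) < 4 + 2*s + s^2)]
  have hm : mParam u = u^3*(8-s^3)/(8*u^3-s^3) := by
    simp only [mParam]; rw [h32]; congr 1; ring
  have hm0 : 0 < mParam u := by
    rw [hm]; exact div_pos (mul_pos (pow_pos hu0 3) h8s) hD
  have hα2 : (alphaParam u)^2 = 2*mParam u*u^2+2 := by
    simp only [alphaParam]
    exact Real.sq_sqrt (by nlinarith [hm0, sq_nonneg u])
  have hα0 : 0 < alphaParam u := Real.sqrt_pos.mpr (by nlinarith [hm0, sq_nonneg u])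
  have hα3 : (alphaParam u)^3 = (2*mParam u*u^2+2)*alphaParam u := by
    rw [pow_succ, hα2]
  have hμ : muParam u = 4*mParam u*alphaParam u/s + alphaParam u*(mParam u)^2/(2*u)
      + alphaParam u/2 := by
    simp only [muParam, ← hsdef]
  have hμ0 : 0 < muParam u := by
    rw [hμ]
    have t1 : 0 < 4*mParam u*alphaParam u/s :=
      div_pos (mul_pos (by linarith [hm0] : (0:ℝ) < 4*mParam u) hα0) hs0
    have t2 : 0 < alphaParam u*(mParam u)^2/(2*u) :=
      div_pos (mul_pos hα0 (by positivity)) (by linarith)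
    linarith
  have hden0 : 0 < 8*u*s^2*(u^3*(8-s^3))*(8*u^3-s^3) + s^3*(u^3*(8-s^3))^2
      + u*s^3*(8*u^3-s^3)^2 := by
    have t1 : 0 < 8*u*s^2*(u^3*(8-s^3))*(8*u^3-s^3) := by positivity
    have t2 : 0 < u*s^3*(8*u^3-s^3)^2 := by positivity
    nlinarith [t1, t2, mul_nonneg (pow_pos hs0 3).le (sq_nonneg (u^3*(8-s^3)))]
  have hval1 : 4 - phi1 u - phi2 u
      = 2 - 2*(mParam u+1)*(alphaParam u)^3/(muParam u*s^3) := by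
    simp only [phi1, phi2]
    rw [h52]
    field_simp
    linear_combination (2*(mParam u+1)*(alphaParam u)^3) * hs2
  have hval2 : 2*(mParam u+1)*(alphaParam u)^3/(muParam u*s^3)
      = (8*u*(u^3*(8-s^3) + (8*u^3-s^3))*((u^3*(8-s^3))*u^2 + (8*u^3-s^3)))
        / (8*u*s^2*(u^3*(8-s^3))*(8*u^3-s^3) + s^3*(u^3*(8-s^3))^2 + u*s^3*(8*u^3-s^3)^2) := by
    rw [hα3, hμ, hm]
    have hD' : u^3*8 - s^3 ≠ 0 := by nlinarith [hD]
    field_simp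
    ring
  have hnd : 8*u*(u^3*(8-s^3) + (8*u^3-s^3))*((u^3*(8-s^3))*u^2 + (8*u^3-s^3))
      - (8*u*s^2*(u^3*(8-s^3))*(8*u^3-s^3) + s^3*(u^3*(8-s^3))^2 + u*s^3*(8*u^3-s^3)^2)
      = (u^3*(8-s^3))^2*(8*u^3-s^3) + u*(8*u^3-s^3)^2*(8-s^3) := by
    linear_combination (-8*u*(u^3*(8-s^3))*(8*u^3-s^3)) * hs2
  have hexc0 : (0:ℝ) ≤ (u^3*(8-s^3))^2*(8*u^3-s^3) + u*(8*u^3-s^3)^2*(8-s^3) :=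
    add_nonneg (mul_nonneg (sq_nonneg _) hD.le)
      (mul_nonneg (mul_nonneg hu0.le (sq_nonneg _)) h8s.le)
  constructor
  · have hr : (Real.sqrt 2)^2 = 2 := Real.sq_sqrt (by norm_num)
    have hr0 : 0 < Real.sqrt 2 := Real.sqrt_pos.mpr (by norm_num)
    have hKU := keyUS u s (Real.sqrt 2) hu0 hs0 hs2 h31 h3u hr hr0
    have hq : (8*u*(u^3*(8-s^3) + (8*u^3-s^3))*((u^3*(8-s^3))*u^2 + (8*u^3-s^3)))
        / (8*u*s^2*(u^3*(8-s^3))*(8*u^3-s^3) + s^3*(u^3*(8-s^3))^2 + u*s^3*(8*u^3-s^3)^2)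
        ≤ (16-4*Real.sqrt 2)/7 := by
      rw [div_le_div_iff₀ hden0 (by norm_num : (0:ℝ) < 7)]
      nlinarith [hKU, hnd]
    rw [hval1, hval2]
    linarith [hq]
  · rw [hval1, hval2]
    have h1 : 1 ≤ (8*u*(u^3*(8-s^3) + (8*u^3-s^3))*((u^3*(8-s^3))*u^2 + (8*u^3-s^3)))
        / (8*u*s^2*(u^3*(8-s^3))*(8*u^3-s^3) + s^3*(u^3*(8-s^3))^2 + u*s^3*(8*u^3-s^3)^2) := by
      rw [le_div_iff₀ hden0]
      nlinarith [hnd, hexc0]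
    linarith [h1]
end

section
/- For every u in the open interval (1/√3, √3), the product ψ₁(u)·ψ₂(u) satisfies 27/16 ≤ ψ₁(u)·ψ₂(u) ≤ 9/4; consequently 1 − 4·ψ₁(u)·ψ₂(u) ≤ −23/4 < 0. -/
set_option maxHeartbeats 4000000 in
/-- Bounds for `ψ₁(u)·ψ₂(u)` on `(1/√3, √3)`, and the consequence
`1 - 4 ψ₁ ψ₂ ≤ -23/4 < 0`. -/
theorem psi_prod_bounds (u : ℝ) (hu1 : 1 / Real.sqrt 3 < u) (hu2 : u < Real.sqrt 3) :
    27 / 16 ≤ psi1 u * psi2 u ∧ psi1 u * psi2 u ≤ 9 / 4 ∧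
    1 - 4 * (psi1 u * psi2 u) ≤ -(23 / 4) ∧ 1 - 4 * (psi1 u * psi2 u) < 0 := by
  have hs3 : Real.sqrt 3 ^ 2 = 3 := Real.sq_sqrt (by norm_num)
  have hs3p : (0:ℝ) < Real.sqrt 3 := Real.sqrt_pos.mpr (by norm_num)
  have hu0 : 0 < u := lt_trans (by positivity) hu1
  have ha : 1 < 3*u^2 := by
    have h1 : 1 < u * Real.sqrt 3 := by
      rw [div_lt_iff₀ hs3p] at hu1; linarith
    nlinarith [h1, hs3, hs3p, hu0]
  have hb : u^2 < 3 := by nlinarith [hu2, hs3, hu0]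
  have h1u : (0:ℝ) ≤ 1 + u^2 := by positivity
  set v := Real.sqrt (1 + u^2) with hvdef
  have hv0 : 0 < v := Real.sqrt_pos.mpr (by positivity)
  have hv2 : v^2 = 1 + u^2 := Real.sq_sqrt h1u
  have hv3 : ((1:ℝ) + u^2) ^ ((3:ℝ)/2) = v^3 := by
    rw [hvdef, Real.sqrt_eq_rpow, ← Real.rpow_natCast (((1:ℝ)+u^2) ^ ((1:ℝ)/2)) 3,
      ← Real.rpow_mul h1u]
    norm_num
  have hv5 : ((1:ℝ) + u^2) ^ ((5:ℝ)/2) = v^5 := by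
    rw [hvdef, Real.sqrt_eq_rpow, ← Real.rpow_natCast (((1:ℝ)+u^2) ^ ((1:ℝ)/2)) 5,
      ← Real.rpow_mul h1u]
    norm_num
  have hvlt : v < 2*u := by nlinarith [hv2, hv0, hu0, ha]
  have hvlt2 : v < 2 := by nlinarith [hv2, hv0, hb]
  have hMd : v^3 < 8*u^3 := by nlinarith [hvlt, hv0, hu0, mul_pos hu0 hv0]
  have hMn : v^3 < 8 := by nlinarith [hvlt2, hv0]
  have hMdne : 8*u^3 - v^3 ≠ 0 := ne_of_gt (by linarith)
  set M := mParam u with hMdef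
  have hMval : M = (8*u^3 - u^3*v^3)/(8*u^3 - v^3) := by
    rw [hMdef, mParam, hv3]
  have hM : M * (8*u^3 - v^3) = u^3 * (8 - v^3) := by
    rw [hMval, div_mul_cancel₀ _ hMdne]; ring
  have hM0 : 0 < M := by
    rw [hMval]
    apply div_pos (by nlinarith [pow_pos hu0 3, hMn]) (by linarith)
  set α := alphaParam u with hadef
  have hα0 : 0 < α := by
    rw [hadef, alphaParam, ← hMdef]
    exact Real.sqrt_pos.mpr (by positivity)
  obtain ⟨B, hBdef⟩ : ∃ b : ℝ, b = (2*M^2*u^4 + (6*M - M^2 - 1)*u^2 + 2)/v^5 - M*u^2/8 - M/(8*u^3) := ⟨_, rfl⟩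
  obtain ⟨B2, hB2def⟩ : ∃ b : ℝ, b = (-M^2*u^4 + (2*M^2 - 6*M + 2)*u^2 - 1)/v^5 + M*u^2/4 + M/(4*u^3) := ⟨_, rfl⟩
  obtain ⟨X, hXdef⟩ : ∃ x : ℝ, x = (M^2*u^2 + 1)/v^3 + M*u^2/8 + M/(8*u^3) := ⟨_, rfl⟩
  have hX0 : 0 < X := by rw [hXdef]; positivity
  have hune : u ≠ 0 := ne_of_gt hu0
  have hvne : v ≠ 0 := ne_of_gt hv0
  -- mu = 4 α X
  have hmu : muParam u = 4*α*X := by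
    have em : muParam u = α*(4*M/v + M^2/(2*u) + 1/2) := by
      rw [muParam, ← hvdef, ← hMdef, ← hadef]; ring
    have c1 : (4*M/v + M^2/(2*u) + 1/2)*(8*u^3*v^3)
        = 32*M*u^3*v^2 + 4*M^2*u^2*v^3 + 4*u^3*v^3 := by
      field_simp; ring
    have c2 : (4*X)*(8*u^3*v^3) = 32*M^2*u^5 + 32*u^3 + 4*M*u^5*v^3 + 4*M*v^3 := by
      rw [hXdef]; field_simp; ring
    have c3 : 32*M*u^3*v^2 + 4*M^2*u^2*v^3 + 4*u^3*v^3
        = 32*M^2*u^5 + 32*u^3 + 4*M*u^5*v^3 + 4*M*v^3 := by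
      linear_combination (-(4*(M*u^2-1)))*hM + 32*M*u^3*hv2
    have c4 := c1.trans (c3.trans c2.symm)
    have c5 := mul_right_cancel₀ (show (8*u^3*v^3 : ℝ) ≠ 0 by positivity) c4
    rw [em, c5]; ring
  have hmune : muParam u ≠ 0 := by rw [hmu]; positivity
  -- psi1, psi2 in terms of B, B2, X
  have hpsi1 : psi1 u = 1 + B/X := by
    rw [psi1, hv5, ← hMdef, ← hadef, hmu, hBdef]
    field_simp
  have hpsi2 : psi2 u = 1 + B2/X := by
    rw [psi2, hv5, ← hMdef, ← hadef, hmu, hB2def]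
    field_simp
  -- B + B2 = X
  have hsum : B + B2 = X := by
    have c : (B + B2 - X)*(8*u^3*v^5) = 8*u^3*(M^2*u^2+1)*((u^2+1) - v^2) := by
      rw [hBdef, hB2def, hXdef]; field_simp; ring
    have c0 : (B + B2 - X)*(8*u^3*v^5) = 0 := by rw [c, hv2]; ring
    have h8 : (8*u^3*v^5 : ℝ) ≠ 0 := by positivity
    have := (mul_eq_zero.mp c0).resolve_right h8
    linarith
  -- key inequality infrastructure
  have h3r : 3*(u-1)^2 ≤ u := by
    have fact1 : (0:ℝ) ≤ (3*u^2-1)*(3-u^2) := mul_nonneg (by linarith) (by linarith)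
    nlinarith [fact1, hu0, mul_pos hu0 hu0, sq_nonneg (3*u^2 - 7*u + 3)]
  -- LOWER: 0 ≤ 4B + X
  have key4 : 0 ≤ 4*B + X := by
    have e1 : (4*B + X)*(8*u^3*v^5*(8*u^3-v^3)^2)
        = (((-32)*u^5 + 8*u^5*v^2 + 64*u^7)*M^2 + ((-3)*v^5 + 192*u^5 + (-3)*u^5*v^5)*M + (64*u^3 + 8*u^3*v^2 + (-32)*u^5))*(8*u^3-v^3)^2 := by
      rw [hBdef, hXdef]; field_simp; ring
    have e2 : (((-32)*u^5 + 8*u^5*v^2 + 64*u^7)*M^2 + ((-3)*v^5 + 192*u^5 + (-3)*u^5*v^5)*M + (64*u^3 + 8*u^3*v^2 + (-32)*u^5))*(8*u^3-v^3)^2 = (96*u^3 + 288*u^5 + 24*u^6 + 288*u^7 + 312*u^8 + 4704*u^9 + 816*u^10 + 9216*u^11 + 816*u^12 + 4704*u^13 + 312*u^14 + 288*u^15 + 24*u^16 + 288*u^17 + 96*u^19) + v*((-3)*u^3 + (-15)*u^5 + (-1344)*u^6 + (-30)*u^7 + (-2691)*u^8 + (-30)*u^9 + (-1359)*u^10 +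 (-1359)*u^11 + (-30)*u^12 + (-2691)*u^13 + (-30)*u^14 + (-1344)*u^15 + (-15)*u^16 + (-3)*u^18) := by
      linear_combination (3*v^8 + (-24)*u^3*v^5 + (-192)*u^5*v^3 + 32*u^5*v^3*M + (-8)*u^5*v^5*M + 3*u^5*v^8 + (-64)*u^7*v^3*M + 1280*u^8 + (-256)*u^8*M + 64*u^8*v^2 + 64*u^8*v^2*M + 32*u^8*v^3 + (-32)*u^8*v^5 + 512*u^10 + 512*u^10*M + (-64)*u^10*v^3)*hM + (96*u^3 + (-3)*u^3*v + 96*u^3*v^2 + (-3)*u^3*v^3 + 96*u^3*v^4 + (-3)*u^3*v^5 + 32*u^3*v^6 + (-3)*u^3*v^7 + (-3)*u^3*v^9 + 192*u^5 + (-12)*u^5*v + 96*u^5*v^2 + (-9)*u^5*v^3 + (-6)*u^5*v^5 + (-3)*u^5*v^7 + 24*u^6 + (-1344)*u^6*v + 24*u^6*v^2 + (-320)*u^6*v^3 + 24*u^6*v^4 + 24*u^6*v^6 + 96*u^7 + (-18)*u^7*v + (-9)*u^7*v^3 + (-3)*u^7*v^5 + 288*u^8 + (-1347)*u^8*v + 264*u^8*v^2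 + (-3)*u^8*v^3 + 240*u^8*v^4 + (-3)*u^8*v^5 + 24*u^8*v^6 + (-3)*u^8*v^7 + (-3)*u^8*v^9 + 512*u^9 + (-12)*u^9*v + (-3)*u^9*v^3 + 528*u^10 + (-12)*u^10*v + 264*u^10*v^2 + (-9)*u^10*v^3 + 24*u^10*v^4 + (-6)*u^10*v^5 + (-3)*u^10*v^7 + 512*u^11 + (-1347)*u^11*v + (-320)*u^11*v^3 + 32*u^11*v^6 + 288*u^12 + (-18)*u^12*v + 24*u^12*v^2 + (-9)*u^12*v^3 + (-3)*u^12*v^5 + 96*u^13 + (-1344)*u^13*v + 96*u^13*v^2 + 96*u^13*v^4 + 24*u^14 + (-12)*u^14*v + (-3)*u^14*v^3 + 192*u^15 + 96*u^15*v^2 + (-3)*u^16*v + 96*u^17)*hv2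
    have hApos : (0:ℝ) < 96*u^3 + 288*u^5 + 24*u^6 + 288*u^7 + 312*u^8 + 4704*u^9 + 816*u^10 + 9216*u^11 + 816*u^12 + 4704*u^13 + 312*u^14 + 288*u^15 + 24*u^16 + 288*u^17 + 96*u^19 := by positivity
    have hCpos : (0:ℝ) ≤ v*(3*u^3 + 15*u^5 + 1344*u^6 + 30*u^7 + 2691*u^8 + 30*u^9 + 1359*u^10 + 1359*u^11 + 30*u^12 + 2691*u^13 + 30*u^14 + 1344*u^15 + 15*u^16 + 3*u^18) := mul_nonneg hv0.le (by positivity)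
    have hSpos : (0:ℝ) ≤ 64124928*u^14 + 156989952*u^13*(u-1)^2 + (-9909504)*u^12*(u-1)^4 + (-634079232)*u^11*(u-1)^6 + (-1416043008)*u^10*(u-1)^8 + (-1800667584)*u^9*(u-1)^10 + (-1573716384)*u^8*(u-1)^12 + (-1005547968)*u^7*(u-1)^14 + (-480274056)*u^6*(u-1)^16 + (-171758574)*u^5*(u-1)^18 + (-45373833)*u^4*(u-1)^20 + (-8591688)*u^3*(u-1)^22 + (-1102779)*u^2*(u-1)^24 + (-85932)*u*(u-1)^26 + (-3069)*(u-1)^28 := by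
      have Sc0 : 3*(u^13*(u-1)^2) ≤ u^14 := by
        have h := mul_le_mul_of_nonneg_right h3r (show (0:ℝ) ≤ u^13 by positivity)
        linarith [h]
      have Sc1 : 3*(u^12*(u-1)^4) ≤ u^13*(u-1)^2 := by
        have h := mul_le_mul_of_nonneg_right h3r (show (0:ℝ) ≤ u^12*(u-1)^2 by positivity)
        linarith [h]
      have Sc2 : 3*(u^11*(u-1)^6) ≤ u^12*(u-1)^4 := by
        have h := mul_le_mul_of_nonneg_right h3r (show (0:ℝ) ≤ u^11*(u-1)^4 by positivity)
        linarith [h]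
      have Sc3 : 3*(u^10*(u-1)^8) ≤ u^11*(u-1)^6 := by
        have h := mul_le_mul_of_nonneg_right h3r (show (0:ℝ) ≤ u^10*(u-1)^6 by positivity)
        linarith [h]
      have Sc4 : 3*(u^9*(u-1)^10) ≤ u^10*(u-1)^8 := by
        have h := mul_le_mul_of_nonneg_right h3r (show (0:ℝ) ≤ u^9*(u-1)^8 by positivity)
        linarith [h]
      have Sc5 : 3*(u^8*(u-1)^12) ≤ u^9*(u-1)^10 := by
        have h := mul_le_mul_of_nonneg_right h3r (show (0:ℝ) ≤ u^8*(u-1)^10 by positivity)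
        linarith [h]
      have Sc6 : 3*(u^7*(u-1)^14) ≤ u^8*(u-1)^12 := by
        have h := mul_le_mul_of_nonneg_right h3r (show (0:ℝ) ≤ u^7*(u-1)^12 by positivity)
        linarith [h]
      have Sc7 : 3*(u^6*(u-1)^16) ≤ u^7*(u-1)^14 := by
        have h := mul_le_mul_of_nonneg_right h3r (show (0:ℝ) ≤ u^6*(u-1)^14 by positivity)
        linarith [h]
      have Sc8 : 3*(u^5*(u-1)^18) ≤ u^6*(u-1)^16 := by
        have h := mul_le_mul_of_nonneg_right h3r (show (0:ℝ) ≤ u^5*(u-1)^16 by positivity)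
        linarith [h]
      have Sc9 : 3*(u^4*(u-1)^20) ≤ u^5*(u-1)^18 := by
        have h := mul_le_mul_of_nonneg_right h3r (show (0:ℝ) ≤ u^4*(u-1)^18 by positivity)
        linarith [h]
      have Sc10 : 3*(u^3*(u-1)^22) ≤ u^4*(u-1)^20 := by
        have h := mul_le_mul_of_nonneg_right h3r (show (0:ℝ) ≤ u^3*(u-1)^20 by positivity)
        linarith [h]
      have Sc11 : 3*(u^2*(u-1)^24) ≤ u^3*(u-1)^22 := by
        have h := mul_le_mul_of_nonneg_right h3r (show (0:ℝ) ≤ u^2*(u-1)^22 by positivity)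
        linarith [h]
      have Sc12 : 3*(u*(u-1)^26) ≤ u^2*(u-1)^24 := by
        have h := mul_le_mul_of_nonneg_right h3r (show (0:ℝ) ≤ u*(u-1)^24 by positivity)
        linarith [h]
      have Sc13 : 3*((u-1)^28) ≤ u*(u-1)^26 := by
        have h := mul_le_mul_of_nonneg_right h3r (show (0:ℝ) ≤ 1*(u-1)^26 by positivity)
        linarith [h]
      have Sp0 : (0:ℝ) ≤ u^14 := by positivity
      have Sp1 : (0:ℝ) ≤ u^13*(u-1)^2 := by positivity
      have Sp2 : (0:ℝ) ≤ u^12*(u-1)^4 := by positivity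
      have Sp3 : (0:ℝ) ≤ u^11*(u-1)^6 := by positivity
      have Sp4 : (0:ℝ) ≤ u^10*(u-1)^8 := by positivity
      have Sp5 : (0:ℝ) ≤ u^9*(u-1)^10 := by positivity
      have Sp6 : (0:ℝ) ≤ u^8*(u-1)^12 := by positivity
      have Sp7 : (0:ℝ) ≤ u^7*(u-1)^14 := by positivity
      have Sp8 : (0:ℝ) ≤ u^6*(u-1)^16 := by positivity
      have Sp9 : (0:ℝ) ≤ u^5*(u-1)^18 := by positivity
      have Sp10 : (0:ℝ) ≤ u^4*(u-1)^20 := by positivity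
      have Sp11 : (0:ℝ) ≤ u^3*(u-1)^22 := by positivity
      have Sp12 : (0:ℝ) ≤ u^2*(u-1)^24 := by positivity
      have Sp13 : (0:ℝ) ≤ u*(u-1)^26 := by positivity
      have Sp14 : (0:ℝ) ≤ 1*(u-1)^28 := by positivity
      linarith [Sc0, Sc1, Sc2, Sc3, Sc4, Sc5, Sc6, Sc7, Sc8, Sc9, Sc10, Sc11, Sc12, Sc13, Sp0, Sp1, Sp2, Sp3, Sp4, Sp5, Sp6, Sp7, Sp8, Sp9, Sp10, Sp11, Sp12, Sp13, Sp14]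
    have hQ : (0:ℝ) ≤ (96*u^3 + 288*u^5 + 24*u^6 + 288*u^7 + 312*u^8 + 4704*u^9 + 816*u^10 + 9216*u^11 + 816*u^12 + 4704*u^13 + 312*u^14 + 288*u^15 + 24*u^16 + 288*u^17 + 96*u^19)^2 - (1+u^2)*((-3)*u^3 + (-15)*u^5 + (-1344)*u^6 + (-30)*u^7 + (-2691)*u^8 + (-30)*u^9 + (-1359)*u^10 + (-1359)*u^11 + (-30)*u^12 + (-2691)*u^13 + (-30)*u^14 + (-1344)*u^15 + (-15)*u^16 + (-3)*u^18)^2 := by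
      have hrep : (96*u^3 + 288*u^5 + 24*u^6 + 288*u^7 + 312*u^8 + 4704*u^9 + 816*u^10 + 9216*u^11 + 816*u^12 + 4704*u^13 + 312*u^14 + 288*u^15 + 24*u^16 + 288*u^17 + 96*u^19)^2 - (1+u^2)*((-3)*u^3 + (-15)*u^5 + (-1344)*u^6 + (-30)*u^7 + (-2691)*u^8 + (-30)*u^9 + (-1359)*u^10 + (-1359)*u^11 + (-30)*u^12 + (-2691)*u^13 + (-30)*u^14 + (-1344)*u^15 + (-15)*u^16 + (-3)*u^18)^2
          = u^6*((3*u^2-1)*(3-u^2))*(64124928*u^14 + 156989952*u^13*(u-1)^2 + (-9909504)*u^12*(u-1)^4 + (-634079232)*u^11*(u-1)^6 + (-1416043008)*u^10*(u-1)^8 + (-1800667584)*u^9*(u-1)^10 + (-1573716384)*u^8*(u-1)^12 + (-1005547968)*u^7*(u-1)^14 + (-480274056)*u^6*(u-1)^16 + (-171758574)*u^5*(u-1)^18 + (-45373833)*u^4*(u-1)^20 + (-8591688)*u^3*(u-1)^22 + (-1102779)*u^2*(u-1)^24 + (-85932)*u*(u-1)^26 + (-3069)*(u-1)^28) := by ri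ng
      rw [hrep]
      exact mul_nonneg (mul_nonneg (by positivity) (mul_nonneg (by linarith) (by linarith))) hSpos
    have hd1 : (0:ℝ) < (96*u^3 + 288*u^5 + 24*u^6 + 288*u^7 + 312*u^8 + 4704*u^9 + 816*u^10 + 9216*u^11 + 816*u^12 + 4704*u^13 + 312*u^14 + 288*u^15 + 24*u^16 + 288*u^17 + 96*u^19) - v*((-3)*u^3 + (-15)*u^5 + (-1344)*u^6 + (-30)*u^7 + (-2691)*u^8 + (-30)*u^9 + (-1359)*u^10 + (-1359)*u^11 + (-30)*u^12 + (-2691)*u^13 + (-30)*u^14 + (-1344)*u^15 + (-15)*u^16 + (-3)*u^18) := by linarith [hCpos, hApos]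
    have hd2 : ((96*u^3 + 288*u^5 + 24*u^6 + 288*u^7 + 312*u^8 + 4704*u^9 + 816*u^10 + 9216*u^11 + 816*u^12 + 4704*u^13 + 312*u^14 + 288*u^15 + 24*u^16 + 288*u^17 + 96*u^19) + v*((-3)*u^3 + (-15)*u^5 + (-1344)*u^6 + (-30)*u^7 + (-2691)*u^8 + (-30)*u^9 + (-1359)*u^10 + (-1359)*u^11 + (-30)*u^12 + (-2691)*u^13 + (-30)*u^14 + (-1344)*u^15 + (-15)*u^16 + (-3)*u^18))*((96*u^3 + 288*u^5 + 24*u^6 + 288*u^7 + 312*u^8 + 4704*u^9 + 816*u^10 + 9216*u^11 + 816*u^12 + 4704*u^13 + 312*u^14 + 288*u^15 + 24*u^16 + 288*u^17 + 96*u^19) - v*((-3)*u^3 + (-15)*u^5 + (-1344)*u^6 + (-30)*u^7 + (-2691)*u^8 + (-30)*u^9 + (-1359)*u^10 + (-1359)*u^11 + (-30)*u^12 + (-2691)*u^13 + (-30)*u^14 + (-1344)*u^15 + (-15)*u^16 + (-3)*u^18)) = (96*u^3 + 288*u^5 + 24*u^6 + 288*u^7 + 312*u^8 + 4704*u^9 +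 816*u^10 + 9216*u^11 + 816*u^12 + 4704*u^13 + 312*u^14 + 288*u^15 + 24*u^16 + 288*u^17 + 96*u^19)^2 - (1+u^2)*((-3)*u^3 + (-15)*u^5 + (-1344)*u^6 + (-30)*u^7 + (-2691)*u^8 + (-30)*u^9 + (-1359)*u^10 + (-1359)*u^11 + (-30)*u^12 + (-2691)*u^13 + (-30)*u^14 + (-1344)*u^15 + (-15)*u^16 + (-3)*u^18)^2 := by
      linear_combination (-(((-3)*u^3 + (-15)*u^5 + (-1344)*u^6 + (-30)*u^7 + (-2691)*u^8 + (-30)*u^9 + (-1359)*u^10 + (-1359)*u^11 + (-30)*u^12 + (-2691)*u^13 + (-30)*u^14 + (-1344)*u^15 + (-15)*u^16 + (-3)*u^18)^2))*hv2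
    have hd3 : (0:ℝ) ≤ (96*u^3 + 288*u^5 + 24*u^6 + 288*u^7 + 312*u^8 + 4704*u^9 + 816*u^10 + 9216*u^11 + 816*u^12 + 4704*u^13 + 312*u^14 + 288*u^15 + 24*u^16 + 288*u^17 + 96*u^19) + v*((-3)*u^3 + (-15)*u^5 + (-1344)*u^6 + (-30)*u^7 + (-2691)*u^8 + (-30)*u^9 + (-1359)*u^10 + (-1359)*u^11 + (-30)*u^12 + (-2691)*u^13 + (-30)*u^14 + (-1344)*u^15 + (-15)*u^16 + (-3)*u^18) :=
      le_of_mul_le_mul_right (by rw [zero_mul, hd2]; exact hQ) hd1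
    have hKpos : (0:ℝ) < 8*u^3*v^5*(8*u^3-v^3)^2 := by
      have : (0:ℝ) < 8*u^3 - v^3 := by linarith
      positivity
    have hprod : 0 ≤ (4*B + X)*(8*u^3*v^5*(8*u^3-v^3)^2) := by
      rw [e1, e2]; exact hd3
    exact le_of_mul_le_mul_right (by rw [zero_mul]; exact hprod) hKpos
  -- UPPER: 0 ≤ 5X - 4B
  have key5 : 0 ≤ 5*X - 4*B := by
    have e1 : (5*X - 4*B)*(8*u^3*v^5*(8*u^3-v^3)^2)
        = ((32*u^5 + 40*u^5*v^2 + (-64)*u^7)*M^2 + (9*v^5 + (-192)*u^5 + 9*u^5*v^5)*M + ((-64)*u^3 + 40*u^3*v^2 + 32*u^5))*(8*u^3-v^3)^2 := by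
      rw [hBdef, hXdef]; field_simp; ring
    have e2 : ((32*u^5 + 40*u^5*v^2 + (-64)*u^7)*M^2 + (9*v^5 + (-192)*u^5 + 9*u^5*v^5)*M + ((-64)*u^3 + 40*u^3*v^2 + 32*u^5))*(8*u^3-v^3)^2 = ((-96)*u^3 + (-288)*u^5 + (-72)*u^6 + (-288)*u^7 + (-552)*u^8 + (-1632)*u^9 + (-1296)*u^10 + (-3072)*u^11 + (-1296)*u^12 + (-1632)*u^13 + (-552)*u^14 + (-288)*u^15 + (-72)*u^16 + (-288)*u^17 + (-96)*u^19) + v*(9*u^3 + 45*u^5 + 960*u^6 + 90*u^7 + 1929*u^8 + 90*u^9 + 1005*u^10 + 1005*u^11 + 90*u^12 + 1929*u^13 + 90*u^14 + 960*u^15 + 45*u^16 + 9*u^18) := by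
      linear_combination ((-9)*v^8 + 72*u^3*v^5 + 192*u^5*v^3 + (-32)*u^5*v^3*M + (-40)*u^5*v^5*M + (-9)*u^5*v^8 + 64*u^7*v^3*M + (-1280)*u^8 + 256*u^8*M + 320*u^8*v^2 + 320*u^8*v^2*M + (-32)*u^8*v^3 + 32*u^8*v^5 + (-512)*u^10 + (-512)*u^10*M + 64*u^10*v^3)*hM + ((-96)*u^3 + 9*u^3*v + (-96)*u^3*v^2 + 9*u^3*v^3 + (-96)*u^3*v^4 + 9*u^3*v^5 + (-32)*u^3*v^6 + 9*u^3*v^7 + 9*u^3*v^9 + (-192)*u^5 + 36*u^5*v + (-96)*u^5*v^2 + 27*u^5*v^3 + 18*u^5*v^5 + 9*u^5*v^7 + (-72)*u^6 + 960*u^6*v + (-72)*u^6*v^2 + (-64)*u^6*v^3 + (-72)*u^6*v^4 + (-72)*u^6*v^6 + (-96)*u^7 + 54*u^7*v + 27*u^7*v^3 + 9*u^7*v^5 + (-480)*u^8 + 969*u^8*v + (-408)*u^8*v^2 + 9*u^8*v^3 + (-336)*u^8*v^4 + 9*u^8*v^5 + (-72)*u^8*v^6 + 9*u^8*v^7 +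 9*u^8*v^9 + 2560*u^9 + 36*u^9*v + 9*u^9*v^3 + (-816)*u^10 + 36*u^10*v + (-408)*u^10*v^2 + 27*u^10*v^3 + (-72)*u^10*v^4 + 18*u^10*v^5 + 9*u^10*v^7 + 2560*u^11 + 969*u^11*v + (-64)*u^11*v^3 + (-32)*u^11*v^6 + (-480)*u^12 + 54*u^12*v + (-72)*u^12*v^2 + 27*u^12*v^3 + 9*u^12*v^5 + (-96)*u^13 + 960*u^13*v + (-96)*u^13*v^2 + (-96)*u^13*v^4 + (-72)*u^14 + 36*u^14*v + 9*u^14*v^3 + (-192)*u^15 + (-96)*u^15*v^2 + 9*u^16*v + (-96)*u^17)*hv2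
    have hEpos : (0:ℝ) < 9*u^3 + 45*u^5 + 960*u^6 + 90*u^7 + 1929*u^8 + 90*u^9 + 1005*u^10 + 1005*u^11 + 90*u^12 + 1929*u^13 + 90*u^14 + 960*u^15 + 45*u^16 + 9*u^18 := by positivity
    have hDpos : (0:ℝ) ≤ (96*u^3 + 288*u^5 + 72*u^6 + 288*u^7 + 552*u^8 + 1632*u^9 + 1296*u^10 + 3072*u^11 + 1296*u^12 + 1632*u^13 + 552*u^14 + 288*u^15 + 72*u^16 + 288*u^17 + 96*u^19) := by positivity
    have hVpos : (0:ℝ) ≤ 3612672*u^16 + 398555136*u^15*(u-1)^2 + 1395495936*u^14*(u-1)^4 + 930193920*u^13*(u-1)^6 + (-4204613376)*u^12*(u-1)^8 + (-13149262080)*u^11*(u-1)^10 + (-20066910336)*u^10*(u-1)^12 + (-20254891968)*u^9*(u-1)^14 + (-14747995584)*u^8*(u-1)^16 + (-8015855400)*u^7*(u-1)^18 + (-3289495932)*u^6*(u-1)^20 + (-1016370630)*u^5*(u-1)^22 + (-232844679)*u^4*(u-1)^24 + (-38352204)*u^3*(u-1)^26 + (-4293045)*u^2*(u-1)^28 + (-292320)*u*(u-1)^30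 + (-9135)*(u-1)^32 := by
      have Vc0 : 3*(u^15*(u-1)^2) ≤ u^16 := by
        have h := mul_le_mul_of_nonneg_right h3r (show (0:ℝ) ≤ u^15 by positivity)
        linarith [h]
      have Vc1 : 3*(u^14*(u-1)^4) ≤ u^15*(u-1)^2 := by
        have h := mul_le_mul_of_nonneg_right h3r (show (0:ℝ) ≤ u^14*(u-1)^2 by positivity)
        linarith [h]
      have Vc2 : 3*(u^13*(u-1)^6) ≤ u^14*(u-1)^4 := by
        have h := mul_le_mul_of_nonneg_right h3r (show (0:ℝ) ≤ u^13*(u-1)^4 by positivity)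
        linarith [h]
      have Vc3 : 3*(u^12*(u-1)^8) ≤ u^13*(u-1)^6 := by
        have h := mul_le_mul_of_nonneg_right h3r (show (0:ℝ) ≤ u^12*(u-1)^6 by positivity)
        linarith [h]
      have Vc4 : 3*(u^11*(u-1)^10) ≤ u^12*(u-1)^8 := by
        have h := mul_le_mul_of_nonneg_right h3r (show (0:ℝ) ≤ u^11*(u-1)^8 by positivity)
        linarith [h]
      have Vc5 : 3*(u^10*(u-1)^12) ≤ u^11*(u-1)^10 := by
        have h := mul_le_mul_of_nonneg_right h3r (show (0:ℝ) ≤ u^10*(u-1)^10 by positivity)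
        linarith [h]
      have Vc6 : 3*(u^9*(u-1)^14) ≤ u^10*(u-1)^12 := by
        have h := mul_le_mul_of_nonneg_right h3r (show (0:ℝ) ≤ u^9*(u-1)^12 by positivity)
        linarith [h]
      have Vc7 : 3*(u^8*(u-1)^16) ≤ u^9*(u-1)^14 := by
        have h := mul_le_mul_of_nonneg_right h3r (show (0:ℝ) ≤ u^8*(u-1)^14 by positivity)
        linarith [h]
      have Vc8 : 3*(u^7*(u-1)^18) ≤ u^8*(u-1)^16 := by
        have h := mul_le_mul_of_nonneg_right h3r (show (0:ℝ) ≤ u^7*(u-1)^16 by positivity)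
        linarith [h]
      have Vc9 : 3*(u^6*(u-1)^20) ≤ u^7*(u-1)^18 := by
        have h := mul_le_mul_of_nonneg_right h3r (show (0:ℝ) ≤ u^6*(u-1)^18 by positivity)
        linarith [h]
      have Vc10 : 3*(u^5*(u-1)^22) ≤ u^6*(u-1)^20 := by
        have h := mul_le_mul_of_nonneg_right h3r (show (0:ℝ) ≤ u^5*(u-1)^20 by positivity)
        linarith [h]
      have Vc11 : 3*(u^4*(u-1)^24) ≤ u^5*(u-1)^22 := by
        have h := mul_le_mul_of_nonneg_right h3r (show (0:ℝ) ≤ u^4*(u-1)^22 by positivity)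
        linarith [h]
      have Vc12 : 3*(u^3*(u-1)^26) ≤ u^4*(u-1)^24 := by
        have h := mul_le_mul_of_nonneg_right h3r (show (0:ℝ) ≤ u^3*(u-1)^24 by positivity)
        linarith [h]
      have Vc13 : 3*(u^2*(u-1)^28) ≤ u^3*(u-1)^26 := by
        have h := mul_le_mul_of_nonneg_right h3r (show (0:ℝ) ≤ u^2*(u-1)^26 by positivity)
        linarith [h]
      have Vc14 : 3*(u*(u-1)^30) ≤ u^2*(u-1)^28 := by
        have h := mul_le_mul_of_nonneg_right h3r (show (0:ℝ) ≤ u*(u-1)^28 by positivity)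
        linarith [h]
      have Vc15 : 3*((u-1)^32) ≤ u*(u-1)^30 := by
        have h := mul_le_mul_of_nonneg_right h3r (show (0:ℝ) ≤ 1*(u-1)^30 by positivity)
        linarith [h]
      have Vp0 : (0:ℝ) ≤ u^16 := by positivity
      have Vp1 : (0:ℝ) ≤ u^15*(u-1)^2 := by positivity
      have Vp2 : (0:ℝ) ≤ u^14*(u-1)^4 := by positivity
      have Vp3 : (0:ℝ) ≤ u^13*(u-1)^6 := by positivity
      have Vp4 : (0:ℝ) ≤ u^12*(u-1)^8 := by positivity
      have Vp5 : (0:ℝ) ≤ u^11*(u-1)^10 := by positivity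
      have Vp6 : (0:ℝ) ≤ u^10*(u-1)^12 := by positivity
      have Vp7 : (0:ℝ) ≤ u^9*(u-1)^14 := by positivity
      have Vp8 : (0:ℝ) ≤ u^8*(u-1)^16 := by positivity
      have Vp9 : (0:ℝ) ≤ u^7*(u-1)^18 := by positivity
      have Vp10 : (0:ℝ) ≤ u^6*(u-1)^20 := by positivity
      have Vp11 : (0:ℝ) ≤ u^5*(u-1)^22 := by positivity
      have Vp12 : (0:ℝ) ≤ u^4*(u-1)^24 := by positivity
      have Vp13 : (0:ℝ) ≤ u^3*(u-1)^26 := by positivity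
      have Vp14 : (0:ℝ) ≤ u^2*(u-1)^28 := by positivity
      have Vp15 : (0:ℝ) ≤ u*(u-1)^30 := by positivity
      have Vp16 : (0:ℝ) ≤ 1*(u-1)^32 := by positivity
      linarith [Vc0, Vc1, Vc2, Vc3, Vc4, Vc5, Vc6, Vc7, Vc8, Vc9, Vc10, Vc11, Vc12, Vc13, Vc14, Vc15, Vp0, Vp1, Vp2, Vp3, Vp4, Vp5, Vp6, Vp7, Vp8, Vp9, Vp10, Vp11, Vp12, Vp13, Vp14, Vp15, Vp16]
    have hQ : (0:ℝ) ≤ (1+u^2)*(9*u^3 + 45*u^5 + 960*u^6 + 90*u^7 + 1929*u^8 + 90*u^9 + 1005*u^10 + 1005*u^11 + 90*u^12 + 1929*u^13 + 90*u^14 + 960*u^15 + 45*u^16 + 9*u^18)^2 - ((-96)*u^3 + (-288)*u^5 + (-72)*u^6 + (-288)*u^7 + (-552)*u^8 + (-1632)*u^9 + (-1296)*u^10 + (-3072)*u^11 + (-1296)*u^12 + (-1632)*u^13 + (-552)*u^14 + (-288)*u^15 + (-72)*u^16 + (-288)*u^17 + (-96)*u^19)^2 := by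
      have hrep : (1+u^2)*(9*u^3 + 45*u^5 + 960*u^6 + 90*u^7 + 1929*u^8 + 90*u^9 + 1005*u^10 + 1005*u^11 + 90*u^12 + 1929*u^13 + 90*u^14 + 960*u^15 + 45*u^16 + 9*u^18)^2 - ((-96)*u^3 + (-288)*u^5 + (-72)*u^6 + (-288)*u^7 + (-552)*u^8 + (-1632)*u^9 + (-1296)*u^10 + (-3072)*u^11 + (-1296)*u^12 + (-1632)*u^13 + (-552)*u^14 + (-288)*u^15 + (-72)*u^16 + (-288)*u^17 + (-96)*u^19)^2 = u^6*(3612672*u^16 + 398555136*u^15*(u-1)^2 + 1395495936*u^14*(u-1)^4 + 930193920*u^13*(u-1)^6 + (-4204613376)*u^12*(u-1)^8 + (-13149262080)*u^11*(u-1)^10 + (-20066910336)*u^10*(u-1)^12 + (-20254891968)*u^9*(u-1)^14 + (-14747995584)*u^8*(u-1)^16 + (-8015855400)*u^7*(u-1)^18 + (-3289495932)*u^6*(u-1)^20 + (-1016370630)*u^5*(u-1)^22 + (-232844679)*u^4*(u-1)^24 + (-38352204)*u^3*(u-1)^26 + (-4293045)*u^2*(u-1)^28 + (-292320)*u*(u-1)^30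 + (-9135)*(u-1)^32) := by ring
      rw [hrep]
      exact mul_nonneg (by positivity) hVpos
    have hd1 : (0:ℝ) < v*(9*u^3 + 45*u^5 + 960*u^6 + 90*u^7 + 1929*u^8 + 90*u^9 + 1005*u^10 + 1005*u^11 + 90*u^12 + 1929*u^13 + 90*u^14 + 960*u^15 + 45*u^16 + 9*u^18) - ((-96)*u^3 + (-288)*u^5 + (-72)*u^6 + (-288)*u^7 + (-552)*u^8 + (-1632)*u^9 + (-1296)*u^10 + (-3072)*u^11 + (-1296)*u^12 + (-1632)*u^13 + (-552)*u^14 + (-288)*u^15 + (-72)*u^16 + (-288)*u^17 + (-96)*u^19) := by linarith [mul_pos hv0 hEpos, hDpos]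
    have hd2 : (((-96)*u^3 + (-288)*u^5 + (-72)*u^6 + (-288)*u^7 + (-552)*u^8 + (-1632)*u^9 + (-1296)*u^10 + (-3072)*u^11 + (-1296)*u^12 + (-1632)*u^13 + (-552)*u^14 + (-288)*u^15 + (-72)*u^16 + (-288)*u^17 + (-96)*u^19) + v*(9*u^3 + 45*u^5 + 960*u^6 + 90*u^7 + 1929*u^8 + 90*u^9 + 1005*u^10 + 1005*u^11 + 90*u^12 + 1929*u^13 + 90*u^14 + 960*u^15 + 45*u^16 + 9*u^18))*(v*(9*u^3 + 45*u^5 + 960*u^6 + 90*u^7 + 1929*u^8 + 90*u^9 + 1005*u^10 + 1005*u^11 + 90*u^12 + 1929*u^13 + 90*u^14 + 960*u^15 + 45*u^16 + 9*u^18) - ((-96)*u^3 + (-288)*u^5 + (-72)*u^6 + (-288)*u^7 + (-552)*u^8 + (-1632)*u^9 + (-1296)*u^10 + (-3072)*u^11 + (-1296)*u^12 + (-1632)*u^13 + (-552)*u^14 + (-288)*u^15 + (-72)*u^16 + (-288)*u^17 + (-96)*u^19)) = (1+u^2)*(9*u^3 + 45*u^5 + 960*u^6 + 90*u^7 + 1929*u^8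 + 90*u^9 + 1005*u^10 + 1005*u^11 + 90*u^12 + 1929*u^13 + 90*u^14 + 960*u^15 + 45*u^16 + 9*u^18)^2 - ((-96)*u^3 + (-288)*u^5 + (-72)*u^6 + (-288)*u^7 + (-552)*u^8 + (-1632)*u^9 + (-1296)*u^10 + (-3072)*u^11 + (-1296)*u^12 + (-1632)*u^13 + (-552)*u^14 + (-288)*u^15 + (-72)*u^16 + (-288)*u^17 + (-96)*u^19)^2 := by
      linear_combination ((9*u^3 + 45*u^5 + 960*u^6 + 90*u^7 + 1929*u^8 + 90*u^9 + 1005*u^10 + 1005*u^11 + 90*u^12 + 1929*u^13 + 90*u^14 + 960*u^15 + 45*u^16 + 9*u^18)^2)*hv2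
    have hd3 : (0:ℝ) ≤ ((-96)*u^3 + (-288)*u^5 + (-72)*u^6 + (-288)*u^7 + (-552)*u^8 + (-1632)*u^9 + (-1296)*u^10 + (-3072)*u^11 + (-1296)*u^12 + (-1632)*u^13 + (-552)*u^14 + (-288)*u^15 + (-72)*u^16 + (-288)*u^17 + (-96)*u^19) + v*(9*u^3 + 45*u^5 + 960*u^6 + 90*u^7 + 1929*u^8 + 90*u^9 + 1005*u^10 + 1005*u^11 + 90*u^12 + 1929*u^13 + 90*u^14 + 960*u^15 + 45*u^16 + 9*u^18) :=
      le_of_mul_le_mul_right (by rw [zero_mul, hd2]; exact hQ) hd1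
    have hKpos : (0:ℝ) < 8*u^3*v^5*(8*u^3-v^3)^2 := by
      have : (0:ℝ) < 8*u^3 - v^3 := by linarith
      positivity
    have hprod : 0 ≤ (5*X - 4*B)*(8*u^3*v^5*(8*u^3-v^3)^2) := by
      rw [e1, e2]; exact hd3
    exact le_of_mul_le_mul_right (by rw [zero_mul]; exact hprod) hKpos
  -- bounds on psi1
  have hp1l : 3/4 ≤ psi1 u := by
    rw [hpsi1]
    have h := (le_div_iff₀ hX0).mpr (show (-(1:ℝ)/4)*X ≤ B by linarith)
    linarith
  have hp1u : psi1 u ≤ 9/4 := by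
    rw [hpsi1]
    have h := (div_le_iff₀ hX0).mpr (show B ≤ (5/4 : ℝ)*X by linarith)
    linarith
  have hp2 : psi2 u = 3 - psi1 u := by
    have hB2X : B2 = X - B := by linarith
    rw [hpsi1, hpsi2, hB2X]
    field_simp
    ring
  rw [hp2]
  set t := psi1 u
  have hlow : 27/16 ≤ t * (3 - t) := by nlinarith [mul_nonneg (by linarith : (0:ℝ) ≤ t - 3/4) (by linarith : (0:ℝ) ≤ 9/4 - t)]
  have hhigh : t * (3 - t) ≤ 9/4 := by nlinarith [sq_nonneg (t - 3/2)]
  refine ⟨hlow, hhigh, by linarith, by linarith⟩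
end

section
/- (Theorem 3.1, circular case, first system.) For every u in the open interval (1/√3, √3), every complex eigenvalue of the 4×4 real matrix J·B₂(u) has nonzero real part; hence the matrix J·B₂(u) is hyperbolic. -/
def Jstd : Matrix (Fin 4) (Fin 4) ℝ :=
  !![0, 0, -1, 0; 0, 0, 0, -1; 1, 0, 0, 0; 0, 1, 0, 0]

noncomputable def B2mat (u : ℝ) : Matrix (Fin 4) (Fin 4) ℝ :=
  !![1, 0, 0, 1; 0, 1, -1, 0; 0, -1, 1 - phi1 u, 0; 1, 0, 0, 1 - phi2 u]

set_option maxHeartbeats 1000000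

private lemma polyP1 (u : ℝ) (hu0 : 0 < u) (h3u2 : 1 < 3*u^2) (hca : u ≤ 1) :
    0 < 4 * (1 + u ^ 2) ^ 3 - 36 * u ^ 3 * (1 - u ^ 2) ^ 2 := by
  nlinarith [mul_pos hu0 hu0, sq_nonneg (1-u), sq_nonneg (1-u^2),
    mul_nonneg (sub_nonneg.2 hca) (sq_nonneg (1-u^2)),
    mul_nonneg (mul_nonneg (sub_nonneg.2 hca) hu0.le) (sq_nonneg (1-u^2)),
    mul_nonneg (mul_nonneg (mul_nonneg (sub_nonneg.2 hca) hu0.le) hu0.le) (sq_nonneg (1-u^2)),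
    mul_pos (mul_pos hu0 hu0) hu0, sq_nonneg (u*(1-u^2)), sq_nonneg (u^2*(1-u))]

private lemma polyP3 (u : ℝ) (hu0 : 0 < u) (h3u2 : 1 < 3*u^2) (hca : u ≤ 1) :
    0 < 4*(1+u^2)^3*(1+u) + 32*u*(1+u^2)^3 - 72*u*(1-u^2)^2*(1+u^2) := by
  nlinarith [mul_pos hu0 hu0, sq_nonneg (1-u), sq_nonneg (1-u^2),
    mul_nonneg (sub_nonneg.2 hca) (sq_nonneg (1-u^2)),
    mul_nonneg (mul_nonneg (sub_nonneg.2 hca) hu0.le) (sq_nonneg (1-u^2)),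
    mul_nonneg (mul_nonneg (mul_nonneg (sub_nonneg.2 hca) hu0.le) hu0.le) (sq_nonneg (1-u^2)),
    mul_pos (mul_pos hu0 hu0) hu0, sq_nonneg (u*(1-u^2)), sq_nonneg (u^2*(1-u))]

private lemma polyP4 (u : ℝ) (hca : 1 ≤ u) (hu23 : u^2 < 3) :
    0 ≤ 4*(1+u^2)^3 + 32*u*(1+u^2)^3 - 36*u*(1-u^2)^2*(1+2*u^2) := by
  nlinarith [sq_nonneg (u-1), sq_nonneg (u^2-1),
    mul_nonneg (sub_nonneg.2 hca) (sq_nonneg (u^2-1)),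
    mul_nonneg (mul_nonneg (sub_nonneg.2 hca) (by linarith : (0:ℝ) ≤ u)) (sq_nonneg (u^2-1)),
    mul_nonneg (sub_nonneg.2 hu23.le) (sq_nonneg (u^2-1)),
    mul_nonneg (mul_nonneg (sub_nonneg.2 hu23.le) (by linarith : (0:ℝ) ≤ u)) (sq_nonneg (u^2-1)),
    mul_nonneg (mul_nonneg (sub_nonneg.2 hu23.le) (by linarith : (0:ℝ) ≤ u)) (sq_nonneg (u-1))]

private lemma polyP5 (u : ℝ) (hca : 1 ≤ u) (hu23 : u^2 < 3) :
    0 < 4*(1+u^2)^3 - 36*(1-u^2)^2 := by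
  nlinarith [sq_nonneg (u^2-1), sq_nonneg u]


lemma abstract_ineq (u s m α μ p1 p2 : ℝ)
    (hu0 : 0 < u) (h3u2 : 1 < 3 * u ^ 2) (hu23 : u ^ 2 < 3)
    (hs2 : s ^ 2 = 1 + u ^ 2) (hs1 : 1 < s)
    (hd : 0 < 8 * u ^ 3 - s ^ 3)
    (hm0 : 0 < m)
    (hm1eq : m - 1 = s ^ 3 * (1 - u ^ 3) / (8 * u ^ 3 - s ^ 3))
    (hα0 : 0 < α) (hα2 : α ^ 2 = 2 * m * u ^ 2 + 2)
    (hμ_eq : μ * (2 * u * s) = α * (8 * m * u + m ^ 2 * s + u * s))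
    (hp1 : p1 = 1 + 2 * (m + 1) * α ^ 3 * (2 - u ^ 2) / (μ * s ^ 5))
    (hp2 : p2 = 1 + 2 * (m + 1) * α ^ 3 * (2 * u ^ 2 - 1) / (μ * s ^ 5)) :
    (4 - p1 - p2) ^ 2 - 4 * (p1 * p2) < 0 := by
  have hs0 : 0 < s := lt_trans one_pos hs1
  have h1u2 : (0:ℝ) < 1 + u ^ 2 := by positivity
  have hα3 : α ^ 3 = α * (2 * m * u ^ 2 + 2) := by
    rw [show α ^ 3 = α ^ 2 * α by ring, hα2]; ring
  have hμ0 : 0 < μ := by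
    have hR : 0 < α * (8 * m * u + m ^ 2 * s + u * s) := by
      apply mul_pos hα0
      have := mul_pos hm0 hu0
      have := mul_pos (mul_pos hm0 hm0) hs0
      have := mul_pos hu0 hs0
      nlinarith
    nlinarith [mul_pos (mul_pos (show (0:ℝ) < 2 by norm_num) hu0) hs0]
  have hs6 : s ^ 6 = (1 + u ^ 2) ^ 3 := by rw [← hs2]; ring
  have hs7 : s ^ 7 = (1 + u ^ 2) ^ 3 * s := by rw [← hs2]; ring
  have hF : 0 < (4 * s ^ 7 - 36 * u ^ 3 * (1 - u ^ 2) ^ 2) * m ^ 2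
      + (32 * u * s ^ 6 - 36 * u * (1 - u ^ 2) ^ 2 * (1 + u ^ 2)) * m
      + (4 * s ^ 7 * u - 36 * u * (1 - u ^ 2) ^ 2) := by
    have hP2 : 0 < 32 * (1 + u ^ 2) ^ 2 - 36 * (1 - u ^ 2) ^ 2 := by nlinarith [sq_nonneg u]
    have hB : 0 < 32 * u * s ^ 6 - 36 * u * (1 - u ^ 2) ^ 2 * (1 + u ^ 2) := by
      rw [hs6]
      nlinarith [mul_pos (mul_pos hu0 h1u2) hP2]
    have hsbound : 4 * (1 + u ^ 2) ^ 3 ≤ 4 * (1 + u ^ 2) ^ 3 * s := by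
      nlinarith [pow_pos h1u2 3]
    rcases le_total u 1 with hca | hca
    · have hmge1 : 1 ≤ m := by
        have h13 : u ^ 3 ≤ 1 := by nlinarith
        have h0 : 0 ≤ s ^ 3 * (1 - u ^ 3) := by
          apply mul_nonneg (by positivity); linarith
        have := div_nonneg h0 hd.le
        rw [← hm1eq] at this; linarith
      have hP1 := polyP1 u hu0 h3u2 hca
      have hA : 0 < 4 * s ^ 7 - 36 * u ^ 3 * (1 - u ^ 2) ^ 2 := by
        rw [hs7]; linarith
      have hP3 := polyP3 u hu0 h3u2 hca
      have hF1 : 0 < (4 * s ^ 7 - 36 * u ^ 3 * (1 - u ^ 2) ^ 2)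
          + (32 * u * s ^ 6 - 36 * u * (1 - u ^ 2) ^ 2 * (1 + u ^ 2))
          + (4 * s ^ 7 * u - 36 * u * (1 - u ^ 2) ^ 2) := by
        rw [hs6, hs7]
        nlinarith [mul_le_mul_of_nonneg_right hsbound hu0.le, hP3]
      have hstep : 0 ≤ (m - 1) * ((m + 1) * (4 * s ^ 7 - 36 * u ^ 3 * (1 - u ^ 2) ^ 2)
          + (32 * u * s ^ 6 - 36 * u * (1 - u ^ 2) ^ 2 * (1 + u ^ 2))) := by
        apply mul_nonneg (by linarith)
        nlinarith [hA, hB, hmge1]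
      nlinarith [hF1, hstep]
    · have hmle1 : m ≤ 1 := by
        have h13 : 1 ≤ u ^ 3 := by nlinarith
        have hnn : s ^ 3 * (1 - u ^ 3) ≤ 0 :=
          mul_nonpos_of_nonneg_of_nonpos (by positivity) (by linarith)
        have := div_nonpos_of_nonpos_of_nonneg hnn hd.le
        rw [← hm1eq] at this; linarith
      have hP5 := polyP5 u hca hu23
      have hC : 0 < 4 * s ^ 7 * u - 36 * u * (1 - u ^ 2) ^ 2 := by
        rw [hs7]
        nlinarith [mul_pos hu0 hP5, mul_le_mul_of_nonneg_right hsbound hu0.le]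
      have hP4 := polyP4 u hca hu23
      have hAB : 0 ≤ (4 * s ^ 7 - 36 * u ^ 3 * (1 - u ^ 2) ^ 2)
          + (32 * u * s ^ 6 - 36 * u * (1 - u ^ 2) ^ 2 * (1 + u ^ 2)) := by
        rw [hs6, hs7]; nlinarith [hP4, hsbound]
      rcases le_or_gt 0 (4 * s ^ 7 - 36 * u ^ 3 * (1 - u ^ 2) ^ 2) with hA | hA
      · nlinarith [mul_nonneg hA (sq_nonneg m), mul_pos hB hm0, hC]
      · have hkey : 0 ≤ (-(4 * s ^ 7 - 36 * u ^ 3 * (1 - u ^ 2) ^ 2)) * (m * (1 - m)) :=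
          mul_nonneg (by linarith) (mul_nonneg hm0.le (by linarith))
        nlinarith [hkey, mul_nonneg hAB hm0.le, hC]
  have hCore : 72 * u * s * (m + 1) * (m * u ^ 2 + 1) * (1 - u ^ 2) ^ 2
      < 64 * m * u * s ^ 7 + 8 * m ^ 2 * s ^ 8 + 8 * u * s ^ 8 := by
    nlinarith [mul_pos hs0 hF]
  have hE : 0 < μ * s ^ 5 := mul_pos hμ0 (pow_pos hs0 5)
  have hgoalE : 18 * (m + 1) * α ^ 3 * (1 - u ^ 2) ^ 2 < 8 * (1 + u ^ 2) * (μ * s ^ 5) := by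
    rw [← mul_lt_mul_iff_left₀ (show (0:ℝ) < 2 * u * s from
      mul_pos (mul_pos (by norm_num) hu0) hs0)]
    calc 18 * (m + 1) * α ^ 3 * (1 - u ^ 2) ^ 2 * (2 * u * s)
        = α * (72 * u * s * (m + 1) * (m * u ^ 2 + 1) * (1 - u ^ 2) ^ 2) := by
          rw [hα3]; ring
      _ < α * (64 * m * u * s ^ 7 + 8 * m ^ 2 * s ^ 8 + 8 * u * s ^ 8) :=
          (mul_lt_mul_iff_right₀ hα0).mpr hCore
      _ = 8 * (1 + u ^ 2) * (μ * s ^ 5) * (2 * u * s) := by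
          rw [show (8:ℝ) * (1 + u ^ 2) * (μ * s ^ 5) * (2 * u * s)
              = 8 * (1 + u ^ 2) * s ^ 5 * (μ * (2 * u * s)) from by ring, hμ_eq, ← hs2]
          ring
  have hX0 : 0 < 2 * (m + 1) * α ^ 3 := by positivity
  have hc0 : 0 < 2 * (m + 1) * α ^ 3 / (μ * s ^ 5) := div_pos hX0 hE
  have hdisc : (4 - p1 - p2) ^ 2 - 4 * (p1 * p2)
      = (2 * (m + 1) * α ^ 3 / (μ * s ^ 5))
        * (9 * (2 * (m + 1) * α ^ 3 / (μ * s ^ 5)) * (1 - u ^ 2) ^ 2 - 8 * (1 + u ^ 2)) := by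
    rw [hp1, hp2]; ring
  rw [hdisc]
  apply mul_neg_of_pos_of_neg hc0
  have h9 : 9 * (2 * (m + 1) * α ^ 3 / (μ * s ^ 5)) * (1 - u ^ 2) ^ 2
      = (18 * (m + 1) * α ^ 3 * (1 - u ^ 2) ^ 2) / (μ * s ^ 5) := by ring
  rw [h9]
  have := (div_lt_iff₀ hE).mpr hgoalE
  linarith

private lemma key_ineq (u : ℝ) (hu1 : 1 / Real.sqrt 3 < u) (hu2 : u < Real.sqrt 3) :
    (4 - phi1 u - phi2 u) ^ 2 - 4 * (phi1 u * phi2 u) < 0 := by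
  have h3pos : (0:ℝ) < Real.sqrt 3 := Real.sqrt_pos.mpr (by norm_num)
  have hs3sq : (Real.sqrt 3) ^ 2 = 3 := Real.sq_sqrt (by norm_num)
  have hu0 : 0 < u := lt_trans (by positivity) hu1
  have h1u : 1 < u * Real.sqrt 3 := by rw [div_lt_iff₀ h3pos] at hu1; linarith
  have h3u2 : 1 < 3 * u ^ 2 := by nlinarith
  have hu23 : u ^ 2 < 3 := by nlinarith
  have h1u2 : (0:ℝ) < 1 + u ^ 2 := by positivity
  have hs2 : (Real.sqrt (1 + u ^ 2)) ^ 2 = 1 + u ^ 2 := Real.sq_sqrt h1u2.le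
  have hs0 : 0 < Real.sqrt (1 + u ^ 2) := Real.sqrt_pos.mpr h1u2
  have hs1 : 1 < Real.sqrt (1 + u ^ 2) := by nlinarith
  have hslt2u : Real.sqrt (1 + u ^ 2) < 2 * u := by nlinarith
  have hs3lt8u : (Real.sqrt (1 + u ^ 2)) ^ 3 < 8 * u ^ 3 := by
    nlinarith [mul_pos hs0 hs0, mul_pos hu0 hu0]
  have hs3lt8 : (Real.sqrt (1 + u ^ 2)) ^ 3 < 8 := by
    have : Real.sqrt (1 + u ^ 2) < 2 := by nlinarith
    nlinarith [mul_pos hs0 hs0]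
  have h32 : (1 + u ^ 2) ^ ((3:ℝ)/2) = (Real.sqrt (1 + u ^ 2)) ^ 3 := by
    rw [Real.sqrt_eq_rpow, ← Real.rpow_natCast ((1 + u ^ 2) ^ ((1:ℝ)/2)) 3,
      ← Real.rpow_mul h1u2.le]
    norm_num
  have h52 : (1 + u ^ 2) ^ ((5:ℝ)/2) = (Real.sqrt (1 + u ^ 2)) ^ 5 := by
    rw [Real.sqrt_eq_rpow, ← Real.rpow_natCast ((1 + u ^ 2) ^ ((1:ℝ)/2)) 5,
      ← Real.rpow_mul h1u2.le]
    norm_num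
  have hd : 0 < 8 * u ^ 3 - (Real.sqrt (1 + u ^ 2)) ^ 3 := by linarith
  have hnum : 0 < 8 * u ^ 3 - u ^ 3 * (Real.sqrt (1 + u ^ 2)) ^ 3 := by
    nlinarith [pow_pos hu0 3]
  have hm_eq : mParam u = (8 * u ^ 3 - u ^ 3 * (Real.sqrt (1 + u ^ 2)) ^ 3)
      / (8 * u ^ 3 - (Real.sqrt (1 + u ^ 2)) ^ 3) := by
    rw [mParam, h32]
  have hm0 : 0 < mParam u := hm_eq ▸ div_pos hnum hd
  have hm1eq : mParam u - 1 = (Real.sqrt (1 + u ^ 2)) ^ 3 * (1 - u ^ 3)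
      / (8 * u ^ 3 - (Real.sqrt (1 + u ^ 2)) ^ 3) := by
    rw [hm_eq]; field_simp; ring
  have hα2 : (alphaParam u) ^ 2 = 2 * mParam u * u ^ 2 + 2 := by
    rw [alphaParam]
    exact Real.sq_sqrt (by nlinarith [sq_nonneg u])
  have hα0 : 0 < alphaParam u := by
    rw [alphaParam]
    exact Real.sqrt_pos.mpr (by nlinarith [sq_nonneg u])
  have hμ_eq : muParam u * (2 * u * Real.sqrt (1 + u ^ 2))
      = alphaParam u * (8 * mParam u * u + (mParam u) ^ 2 * Real.sqrt (1 + u ^ 2)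
        + u * Real.sqrt (1 + u ^ 2)) := by
    rw [muParam]
    field_simp
    ring
  have hp1 : phi1 u = 1 + 2 * (mParam u + 1) * (alphaParam u) ^ 3 * (2 - u ^ 2)
      / (muParam u * (Real.sqrt (1 + u ^ 2)) ^ 5) := by rw [phi1, h52]
  have hp2 : phi2 u = 1 + 2 * (mParam u + 1) * (alphaParam u) ^ 3 * (2 * u ^ 2 - 1)
      / (muParam u * (Real.sqrt (1 + u ^ 2)) ^ 5) := by rw [phi2, h52]
  exact abstract_ineq u (Real.sqrt (1 + u ^ 2)) (mParam u) (alphaParam u) (muParam u)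
    (phi1 u) (phi2 u) hu0 h3u2 hu23 hs2 hs1 hd hm0 hm1eq hα0 hα2 hμ_eq hp1 hp2

private lemma det_eq (u : ℝ) (lam : ℂ) :
    Matrix.det (algebraMap ℂ (Matrix (Fin 4) (Fin 4) ℂ) lam - (Jstd * B2mat u).map Complex.ofReal)
      = lam ^ 4 + ((4 - phi1 u - phi2 u : ℝ) : ℂ) * lam ^ 2 + ((phi1 u * phi2 u : ℝ) : ℂ) := by
  rw [show (algebraMap ℂ (Matrix (Fin 4) (Fin 4) ℂ)) lam = Matrix.diagonal (fun _ => lam) by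
    simp [Matrix.algebraMap_eq_diagonal]]
  simp [Jstd, B2mat, Matrix.mul_apply, Matrix.det_succ_row_zero, Fin.sum_univ_succ,
    Matrix.diagonal, Matrix.submatrix, Fin.succAbove]
  push_cast
  ring

/-- Every complex eigenvalue of `J·B₂(u)` has nonzero real part: the matrix is
hyperbolic. -/
theorem JB2_hyperbolic (u : ℝ) (hu1 : 1 / Real.sqrt 3 < u) (hu2 : u < Real.sqrt 3)
    (lam : ℂ) (hlam : lam ∈ spectrum ℂ ((Jstd * B2mat u).map (Complex.ofReal))) :
    lam.re ≠ 0 := by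
  intro hre
  have hdet : Matrix.det (algebraMap ℂ (Matrix (Fin 4) (Fin 4) ℂ) lam
      - (Jstd * B2mat u).map Complex.ofReal) = 0 := by
    by_contra hd
    exact spectrum.mem_iff.mp hlam
      ((Matrix.isUnit_iff_isUnit_det _).mpr (isUnit_iff_ne_zero.mpr hd))
  have hquart : lam ^ 4 + ((4 - phi1 u - phi2 u : ℝ) : ℂ) * lam ^ 2
      + ((phi1 u * phi2 u : ℝ) : ℂ) = 0 := by rw [← det_eq u lam]; exact hdet
  have hl : lam = (lam.im : ℂ) * Complex.I := by
    apply Complex.ext <;> simp [hre]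
  rw [hl] at hquart
  have h2 : ((lam.im ^ 4 - (4 - phi1 u - phi2 u) * lam.im ^ 2 + phi1 u * phi2 u : ℝ) : ℂ)
      = 0 := by
    push_cast at hquart ⊢
    linear_combination hquart + ((lam.im:ℂ) ^ 4 * (1 - Complex.I ^ 2)
      - (4 - (phi1 u:ℂ) - (phi2 u:ℂ)) * (lam.im:ℂ) ^ 2) * Complex.I_sq
  have hreal : lam.im ^ 4 - (4 - phi1 u - phi2 u) * lam.im ^ 2 + phi1 u * phi2 u = 0 := by
    exact_mod_cast h2
  have hk := key_ineq u hu1 hu2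
  nlinarith [sq_nonneg (2 * lam.im ^ 2 - (4 - phi1 u - phi2 u)), hreal, hk]
end

section
/- (Proposition 2.6, key conjugation identity.) Let J₄ = diag(J₂, J₂) with J₂ = [[0,−1],[1,0]], and for u ∈ (1/√3, √3), e ∈ [0,1) and t ∈ ℝ let B₁(u,e,t) be the 4×4 real block matrix [[I₂, −J₂],[J₂, I₂ − K(u,e,t)]] where K(u,e,t) = (1/(1+e·cos t))·diag(φ₁(u), φ₂(u)). Then J₄⁻¹·B₁(u,e,t)·J₄ = B₁(1/u,e,t) for all t; consequently, if γ : ℝ → M₄(ℝ) satisfies γ(0) = I₄ and γ′(t) = J·B₁(u,e,t)·γ(t) for all t (J the standard 4×4 symplectic matrix), then the function t ↦ J₄⁻¹·γ(t)·J₄ takes the value I₄ at t = 0 and satisfies the same differential equation with u replaced by 1/u. -/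
def J4blk : Matrix (Fin 4) (Fin 4) ℝ :=
  !![0, -1, 0, 0; 1, 0, 0, 0; 0, 0, 0, -1; 0, 0, 1, 0]

/-- The matrix `B₁(u,e,t) = [[I₂, −J₂],[J₂, I₂ − K(u,e,t)]]` with
`K(u,e,t) = (1/(1+e·cos t))·diag(φ₁(u), φ₂(u))`. -/
noncomputable def B1mat (u e t : ℝ) : Matrix (Fin 4) (Fin 4) ℝ :=
  !![1, 0, 0, 1;
     0, 1, -1, 0;
     0, -1, 1 - phi1 u / (1 + e * Real.cos t), 0;
     1, 0, 0, 1 - phi2 u / (1 + e * Real.cos t)]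


lemma rpow_half_nat (x : ℝ) (hx : 0 ≤ x) (n : ℕ) :
    x ^ ((n : ℝ) / 2) = Real.sqrt x ^ n := by
  rw [Real.sqrt_eq_rpow, ← Real.rpow_natCast (x ^ ((1:ℝ)/2)) n, ← Real.rpow_mul hx]
  ring_nf

lemma phi_formula (u : ℝ) (hu : 0 < u) (hm : 0 < mParam u) (X : ℝ) :
    1 + 2 * (mParam u + 1) * (alphaParam u) ^ 3 * X /
      (muParam u * (1 + u ^ 2) ^ ((5 : ℝ) / 2)) =
    1 + 2 * (mParam u + 1) * (2 * mParam u * u ^ 2 + 2) * X /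
      ((4 * mParam u / Real.sqrt (1 + u ^ 2) + (mParam u) ^ 2 / (2 * u) + 1 / 2) *
        Real.sqrt (1 + u ^ 2) ^ 5) := by
  have hpos : (0:ℝ) < 2 * mParam u * u ^ 2 + 2 := by positivity
  have hA : alphaParam u ^ 2 = 2 * mParam u * u ^ 2 + 2 := Real.sq_sqrt hpos.le
  have hA0 : 0 < alphaParam u := Real.sqrt_pos.mpr hpos
  have hs0 : 0 < Real.sqrt (1 + u ^ 2) := Real.sqrt_pos.mpr (by positivity)
  have hc : 0 < 4 * mParam u / Real.sqrt (1 + u ^ 2) + (mParam u) ^ 2 / (2 * u) + 1 / 2 := by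
    positivity
  have hmu : muParam u = alphaParam u *
      (4 * mParam u / Real.sqrt (1 + u ^ 2) + (mParam u) ^ 2 / (2 * u) + 1 / 2) := by
    rw [muParam]; ring
  have h52 : (1 + u ^ 2) ^ ((5:ℝ)/2) = Real.sqrt (1 + u ^ 2) ^ 5 := by
    have := rpow_half_nat (1 + u ^ 2) (by positivity) 5
    norm_num at this ⊢; exact this
  have hA3 : alphaParam u ^ 3 = (2 * mParam u * u ^ 2 + 2) * alphaParam u := by
    rw [pow_succ, hA]
  rw [h52, hmu, hA3]
  field_simp

lemma phi_swap (u : ℝ) (hu1 : 1 / Real.sqrt 3 < u) (hu2 : u < Real.sqrt 3) :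
    phi1 (1 / u) = phi2 u ∧ phi2 (1 / u) = phi1 u := by
  have hs3 : (0:ℝ) < Real.sqrt 3 := by positivity
  have h3 : Real.sqrt 3 ^ 2 = 3 := Real.sq_sqrt (by norm_num)
  have hu : 0 < u := lt_trans (by positivity) hu1
  have hu2sq : u ^ 2 < 3 := by nlinarith
  have hu1sq : 1 < 3 * u ^ 2 := by
    have h1 : 1 < u * Real.sqrt 3 := by
      rw [div_lt_iff₀ hs3] at hu1; linarith
    nlinarith
  set s := Real.sqrt (1 + u ^ 2) with hsdef
  have hs0 : 0 < s := Real.sqrt_pos.mpr (by positivity)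
  have hs2 : s ^ 2 = 1 + u ^ 2 := Real.sq_sqrt (by positivity)
  have hslt2 : s < 2 := by nlinarith
  have hslt2u : s < 2 * u := by nlinarith
  have h32 : (1 + u ^ 2) ^ ((3:ℝ)/2) = s ^ 3 := by
    have := rpow_half_nat (1 + u ^ 2) (by positivity) 3
    norm_num at this ⊢; exact this
  have hden : 0 < 8 * u ^ 3 - s ^ 3 := by nlinarith
  have hnum : 0 < 8 - s ^ 3 := by nlinarith
  have hnum' : 0 < 8 * u ^ 3 - u ^ 3 * s ^ 3 := by
    nlinarith [mul_pos (pow_pos hu 3) hnum]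
  have hm : 0 < mParam u := by
    rw [mParam, h32]
    exact div_pos hnum' hden
  have hspos : (0:ℝ) < s / u := by positivity
  have h1u : 1 + (1 / u) ^ 2 = (s / u) ^ 2 := by
    rw [div_pow s, hs2]
    field_simp
    ring
  have hsqrt' : Real.sqrt (1 + (1 / u) ^ 2) = s / u := by
    rw [h1u, Real.sqrt_sq hspos.le]
  have h32' : (1 + (1 / u) ^ 2) ^ ((3:ℝ)/2) = (s / u) ^ 3 := by
    have := rpow_half_nat (1 + (1 / u) ^ 2) (by positivity) 3
    rw [hsqrt'] at this
    norm_num at this ⊢; exact this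
  have hne1 : 8 * (1 / u) ^ 3 - (s / u) ^ 3 ≠ 0 := by
    have e : 8 * (1 / u) ^ 3 - (s / u) ^ 3 = (8 - s ^ 3) / u ^ 3 := by
      field_simp
    rw [e]
    exact ne_of_gt (div_pos hnum (pow_pos hu 3))
  have hminv : mParam (1 / u) = 1 / mParam u := by
    rw [mParam, mParam, h32, h32', one_div_div,
      div_eq_div_iff hne1 (ne_of_gt hnum')]
    field_simp
  have hm' : 0 < mParam (1 / u) := by rw [hminv]; positivity
  have hu' : (0:ℝ) < 1 / u := by positivity
  constructor
  · rw [phi1, phi2, phi_formula (1 / u) hu' hm', phi_formula u hu hm, hminv, hsqrt']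
    have hc : (0:ℝ) < 4 * mParam u / s + (mParam u) ^ 2 / (2 * u) + 1 / 2 := by positivity
    have hc' : (0:ℝ) < 4 * (1 / mParam u) / (s / u) + (1 / mParam u) ^ 2 / (2 * (1 / u)) + 1 / 2 := by
      positivity
    field_simp
    ring
  · rw [phi2, phi1, phi_formula (1 / u) hu' hm', phi_formula u hu hm, hminv, hsqrt']
    have hc : (0:ℝ) < 4 * mParam u / s + (mParam u) ^ 2 / (2 * u) + 1 / 2 := by positivity
    have hc' : (0:ℝ) < 4 * (1 / mParam u) / (s / u) + (1 / mParam u) ^ 2 / (2 * (1 / u)) + 1 / 2 := by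
      positivity
    field_simp
    ring

def Jbinv : Matrix (Fin 4) (Fin 4) ℝ :=
  !![0, 1, 0, 0; -1, 0, 0, 0; 0, 0, 0, 1; 0, 0, -1, 0]

lemma Jb_mul_Jbinv : J4blk * Jbinv = 1 := by
  ext i j
  fin_cases i <;> fin_cases j <;>
    simp [J4blk, Jbinv, Matrix.mul_apply, Fin.sum_univ_four, Matrix.one_apply,
      Matrix.vecHead, Matrix.vecTail]

lemma Jbinv_mul_Jb : Jbinv * J4blk = 1 := by
  ext i j
  fin_cases i <;> fin_cases j <;>
    simp [J4blk, Jbinv, Matrix.mul_apply, Fin.sum_univ_four, Matrix.one_apply,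
      Matrix.vecHead, Matrix.vecTail]

lemma Jb_inv_eq : J4blk⁻¹ = Jbinv := Matrix.inv_eq_right_inv Jb_mul_Jbinv

lemma Jstd_comm_Jbinv : Jstd * Jbinv = Jbinv * Jstd := by
  ext i j
  fin_cases i <;> fin_cases j <;>
    simp [Jstd, Jbinv, Matrix.mul_apply, Fin.sum_univ_four,
      Matrix.vecHead, Matrix.vecTail]

/-- Proposition 2.6, key conjugation identity: `J₄⁻¹ B₁(u,e,t) J₄ = B₁(1/u,e,t)`,
and hence the conjugated fundamental solution solves the system with `u` replaced
by `1/u`. -/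
theorem conjugation_identity (u e : ℝ) (hu1 : 1 / Real.sqrt 3 < u)
    (hu2 : u < Real.sqrt 3) (he0 : 0 ≤ e) (he1 : e < 1) :
    (∀ t : ℝ, J4blk⁻¹ * B1mat u e t * J4blk = B1mat (1 / u) e t) ∧
    (∀ γ : ℝ → Matrix (Fin 4) (Fin 4) ℝ,
      γ 0 = 1 →
      (∀ t (i j : Fin 4), HasDerivAt (fun s => γ s i j)
          ((Jstd * B1mat u e t * γ t) i j) t) →
      (J4blk⁻¹ * γ 0 * J4blk = 1 ∧
        ∀ t (i j : Fin 4), HasDerivAt (fun s => (J4blk⁻¹ * γ s * J4blk) i j)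
          ((Jstd * B1mat (1 / u) e t * (J4blk⁻¹ * γ t * J4blk)) i j) t)) := by
  obtain ⟨hphi1, hphi2⟩ := phi_swap u hu1 hu2
  have hp1 : phi1 u⁻¹ = phi2 u := by rw [← one_div]; exact hphi1
  have hp2 : phi2 u⁻¹ = phi1 u := by rw [← one_div]; exact hphi2
  have part1 : ∀ t : ℝ, J4blk⁻¹ * B1mat u e t * J4blk = B1mat (1 / u) e t := by
    intro t
    rw [Jb_inv_eq]
    ext i j
    fin_cases i <;> fin_cases j <;>
      simp [B1mat, Jbinv, J4blk, Matrix.mul_apply, Fin.sum_univ_four,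
        Matrix.vecHead, Matrix.vecTail, hphi1, hphi2, hp1, hp2]
  refine ⟨part1, fun γ hγ0 hγ' => ⟨?_, ?_⟩⟩
  · rw [hγ0, mul_one, Jb_inv_eq, Jbinv_mul_Jb]
  · intro t i j
    have hfun : (fun s => (J4blk⁻¹ * γ s * J4blk) i j)
        = fun s => ∑ l, (∑ k, Jbinv i k * γ s k l) * J4blk l j := by
      funext s
      rw [Jb_inv_eq]
      simp [Matrix.mul_apply]
    rw [hfun]
    have hD : HasDerivAt (fun s => ∑ l, (∑ k, Jbinv i k * γ s k l) * J4blk l j)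
        (∑ l, (∑ k, Jbinv i k * (Jstd * B1mat u e t * γ t) k l) * J4blk l j) t := by
      apply HasDerivAt.fun_sum
      intro l _
      apply HasDerivAt.mul_const
      apply HasDerivAt.fun_sum
      intro k _
      exact (hγ' t k l).const_mul _
    convert hD using 1
    have hmat : Jstd * B1mat (1 / u) e t * (J4blk⁻¹ * γ t * J4blk)
        = Jbinv * (Jstd * B1mat u e t * γ t) * J4blk := by
      rw [← part1 t, Jb_inv_eq]
      calc Jstd * (Jbinv * B1mat u e t * J4blk) * (Jbinv * γ t * J4blk)
          = (Jstd * Jbinv) * (B1mat u e t * ((J4blk * Jbinv) * (γ t * J4blk))) := by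
            simp only [Matrix.mul_assoc]
        _ = Jbinv * (Jstd * B1mat u e t * γ t) * J4blk := by
            rw [Jb_mul_Jbinv, one_mul, Jstd_comm_Jbinv]
            simp only [Matrix.mul_assoc]
    rw [hmat]
    simp [Matrix.mul_apply]
end

section
/- (Central configuration identity, equation (2.108).) For every u ∈ (1/√3, √3), set m₁ = m₃ = m(u), m₂ = m₄ = 1, and define the points of ℝ²: a₁ = (0, u)/α(u), a₂ = (1, 0)/α(u), a₃ = (0, −u)/α(u), a₄ = (−1, 0)/α(u). Then for each i ∈ {1,2,3,4}: μ(u)·mᵢ·aᵢ + Σ_{j≠i} (mᵢ·mⱼ)·(aⱼ − aᵢ)/‖aᵢ − aⱼ‖³ = 0, where ‖·‖ is the Euclidean norm on ℝ². -/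
/-- The four vertices of the rhombus central configuration, as points of the
Euclidean plane. -/
noncomputable def rhombusPt (u : ℝ) : Fin 4 → EuclideanSpace ℝ (Fin 2)
  | 0 => (alphaParam u)⁻¹ • (WithLp.equiv 2 (Fin 2 → ℝ)).symm ![0, u]
  | 1 => (alphaParam u)⁻¹ • (WithLp.equiv 2 (Fin 2 → ℝ)).symm ![1, 0]
  | 2 => (alphaParam u)⁻¹ • (WithLp.equiv 2 (Fin 2 → ℝ)).symm ![0, -u]
  | 3 => (alphaParam u)⁻¹ • (WithLp.equiv 2 (Fin 2 → ℝ)).symm ![-1, 0]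

/-- The masses `m₁ = m₃ = m(u)`, `m₂ = m₄ = 1`. -/
noncomputable def rhombusMass (u : ℝ) : Fin 4 → ℝ
  | 0 => mParam u
  | 1 => 1
  | 2 => mParam u
  | 3 => 1

set_option maxHeartbeats 1600000 in
/-- Central configuration identity (equation (2.108)):
`μ(u)·mᵢ·aᵢ + Σ_{j≠i} mᵢ mⱼ (aⱼ − aᵢ)/‖aᵢ − aⱼ‖³ = 0`. -/
theorem rhombus_central_configuration (u : ℝ) (hu1 : 1 / Real.sqrt 3 < u)
    (hu2 : u < Real.sqrt 3) (i : Fin 4) :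
    (muParam u * rhombusMass u i) • rhombusPt u i +
      ∑ j ∈ Finset.univ.erase i,
        ((rhombusMass u i * rhombusMass u j) / ‖rhombusPt u i - rhombusPt u j‖ ^ 3) •
          (rhombusPt u j - rhombusPt u i) = 0 := by
  have h3 : (0:ℝ) < Real.sqrt 3 := Real.sqrt_pos.mpr (by norm_num)
  have hu0 : 0 < u := lt_trans (by positivity) hu1
  have hu2' : u ^ 2 < 3 := by
    have h := mul_self_lt_mul_self hu0.le hu2
    rw [Real.mul_self_sqrt (by norm_num : (0:ℝ) ≤ 3)] at h
    nlinarith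
  have hu1' : 1 / 3 < u ^ 2 := by
    have h := mul_self_lt_mul_self (by positivity) hu1
    have h3' : (1 / Real.sqrt 3) * (1 / Real.sqrt 3) = 1 / 3 := by
      rw [div_mul_div_comm, Real.mul_self_sqrt (by norm_num : (0:ℝ) ≤ 3)]; norm_num
    nlinarith
  set c := Real.sqrt (1 + u ^ 2) with hc
  have hc0 : 0 < c := Real.sqrt_pos.mpr (by positivity)
  have hc2 : c ^ 2 = 1 + u ^ 2 := Real.sq_sqrt (by positivity)
  have hrpow : (1 + u ^ 2) ^ ((3:ℝ)/2) = c ^ 3 := by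
    rw [show ((3:ℝ)/2) = (1/2 : ℝ) * (3:ℕ) by norm_num,
      Real.rpow_mul (by positivity), Real.rpow_natCast, hc, Real.sqrt_eq_rpow]
  have hclt : c < 2 * u := by
    have : c < Real.sqrt (4 * u ^ 2) := Real.sqrt_lt_sqrt (by positivity) (by nlinarith)
    rwa [show (4:ℝ) * u ^ 2 = (2*u)^2 by ring, Real.sqrt_sq (by positivity)] at this
  have hc2lt : c < 2 := by
    have : c < Real.sqrt 4 := Real.sqrt_lt_sqrt (by positivity) (by nlinarith)
    rwa [show (4:ℝ) = 2^2 by norm_num, Real.sqrt_sq (by norm_num)] at this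
  have hden : 0 < 8 * u ^ 3 - c ^ 3 := by
    have := pow_lt_pow_left₀ hclt hc0.le (by norm_num : (3:ℕ) ≠ 0)
    nlinarith
  have hnum : 0 < 8 * u ^ 3 - u ^ 3 * c ^ 3 := by
    have := pow_lt_pow_left₀ hc2lt hc0.le (by norm_num : (3:ℕ) ≠ 0)
    nlinarith [pow_pos hu0 3]
  set m := mParam u with hmdef
  have hm : m * (8 * u ^ 3 - c ^ 3) = 8 * u ^ 3 - u ^ 3 * c ^ 3 := by
    rw [hmdef, mParam, hrpow, div_mul_cancel₀ _ (ne_of_gt hden)]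
  have hm0 : 0 < m := by
    rw [hmdef, mParam, hrpow]; exact div_pos hnum hden
  set α := alphaParam u with hadef
  have hα0 : 0 < α := Real.sqrt_pos.mpr (by positivity)
  have hα2 : α ^ 2 = 2 * m * u ^ 2 + 2 := Real.sq_sqrt (by positivity)
  have hμ : muParam u = 4 * m * α / c + α * m ^ 2 / (2 * u) + α / 2 := rfl
  have L1 : muParam u = m * α ^ 3 / (4 * u ^ 3) + 2 * α ^ 3 / c ^ 3 := by
    rw [hμ]
    field_simp
    linear_combination 4 * hm + 32*u^3*m * hc2 - 2*(m*c^3+8*u^3) * hα2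
  have L2 : muParam u = α ^ 3 / 4 + 2 * m * α ^ 3 / c ^ 3 := by
    rw [hμ]
    field_simp
    linear_combination (-4*m) * hm + 32*u*m * hc2 - 2*u*(c^3+8*m) * hα2
  -- norm computation
  have hnorm : ∀ x y z w : ℝ,
      ‖(α⁻¹ • (WithLp.equiv 2 (Fin 2 → ℝ)).symm ![x, y] : EuclideanSpace ℝ (Fin 2)) -
        α⁻¹ • (WithLp.equiv 2 (Fin 2 → ℝ)).symm ![z, w]‖
        = Real.sqrt ((x - z) ^ 2 + (y - w) ^ 2) / α := by
    intro x y z w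
    rw [← smul_sub, WithLp.equiv_symm_apply, ← WithLp.toLp_sub, norm_smul]
    have h1 : (![x, y] - ![z, w] : Fin 2 → ℝ) = ![x - z, y - w] := by
      funext k; fin_cases k <;> simp
    rw [h1, EuclideanSpace.norm_eq]
    simp only [PiLp.toLp_apply, Fin.sum_univ_two, Matrix.cons_val_zero,
      Matrix.cons_val_one, Matrix.head_cons, Real.norm_eq_abs, sq_abs, norm_inv,
      Real.norm_eq_abs, abs_of_pos hα0]
    rw [inv_mul_eq_div]
  have n01 : ‖rhombusPt u 0 - rhombusPt u 1‖ = c / α := by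
    show ‖(α⁻¹ • (WithLp.equiv 2 (Fin 2 → ℝ)).symm ![0, u] : EuclideanSpace ℝ (Fin 2)) -
        α⁻¹ • (WithLp.equiv 2 (Fin 2 → ℝ)).symm ![1, 0]‖ = c / α
    rw [hnorm, show ((0:ℝ) - 1) ^ 2 + (u - 0) ^ 2 = 1 + u ^ 2 by ring]
  have n03 : ‖rhombusPt u 0 - rhombusPt u 3‖ = c / α := by
    show ‖(α⁻¹ • (WithLp.equiv 2 (Fin 2 → ℝ)).symm ![0, u] : EuclideanSpace ℝ (Fin 2)) -
        α⁻¹ • (WithLp.equiv 2 (Fin 2 → ℝ)).symm ![-1, 0]‖ = c / α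
    rw [hnorm, show ((0:ℝ) - -1) ^ 2 + (u - 0) ^ 2 = 1 + u ^ 2 by ring]
  have n21 : ‖rhombusPt u 2 - rhombusPt u 1‖ = c / α := by
    show ‖(α⁻¹ • (WithLp.equiv 2 (Fin 2 → ℝ)).symm ![0, -u] : EuclideanSpace ℝ (Fin 2)) -
        α⁻¹ • (WithLp.equiv 2 (Fin 2 → ℝ)).symm ![1, 0]‖ = c / α
    rw [hnorm, show ((0:ℝ) - 1) ^ 2 + (-u - 0) ^ 2 = 1 + u ^ 2 by ring]
  have n23 : ‖rhombusPt u 2 - rhombusPt u 3‖ = c / α := by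
    show ‖(α⁻¹ • (WithLp.equiv 2 (Fin 2 → ℝ)).symm ![0, -u] : EuclideanSpace ℝ (Fin 2)) -
        α⁻¹ • (WithLp.equiv 2 (Fin 2 → ℝ)).symm ![-1, 0]‖ = c / α
    rw [hnorm, show ((0:ℝ) - -1) ^ 2 + (-u - 0) ^ 2 = 1 + u ^ 2 by ring]
  have n02 : ‖rhombusPt u 0 - rhombusPt u 2‖ = 2 * u / α := by
    show ‖(α⁻¹ • (WithLp.equiv 2 (Fin 2 → ℝ)).symm ![0, u] : EuclideanSpace ℝ (Fin 2)) -
        α⁻¹ • (WithLp.equiv 2 (Fin 2 → ℝ)).symm ![0, -u]‖ = 2 * u / α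
    rw [hnorm, show ((0:ℝ) - 0) ^ 2 + (u - -u) ^ 2 = (2*u) ^ 2 by ring,
      Real.sqrt_sq (by positivity)]
  have n13 : ‖rhombusPt u 1 - rhombusPt u 3‖ = 2 / α := by
    show ‖(α⁻¹ • (WithLp.equiv 2 (Fin 2 → ℝ)).symm ![1, 0] : EuclideanSpace ℝ (Fin 2)) -
        α⁻¹ • (WithLp.equiv 2 (Fin 2 → ℝ)).symm ![-1, 0]‖ = 2 / α
    rw [hnorm, show ((1:ℝ) - -1) ^ 2 + (0 - 0) ^ 2 = 2 ^ 2 by ring,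
      Real.sqrt_sq (by norm_num)]
  have n10 : ‖rhombusPt u 1 - rhombusPt u 0‖ = c / α := by rw [norm_sub_rev]; exact n01
  have n30 : ‖rhombusPt u 3 - rhombusPt u 0‖ = c / α := by rw [norm_sub_rev]; exact n03
  have n12 : ‖rhombusPt u 1 - rhombusPt u 2‖ = c / α := by rw [norm_sub_rev]; exact n21
  have n32 : ‖rhombusPt u 3 - rhombusPt u 2‖ = c / α := by rw [norm_sub_rev]; exact n23
  have n20 : ‖rhombusPt u 2 - rhombusPt u 0‖ = 2 * u / α := by rw [norm_sub_rev]; exact n02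
  have n31 : ‖rhombusPt u 3 - rhombusPt u 1‖ = 2 / α := by rw [norm_sub_rev]; exact n13
  have hcα : c / α ≠ 0 := by positivity
  have huα : 2 * u / α ≠ 0 := by positivity
  have h2α : (2:ℝ) / α ≠ 0 := by positivity
  fin_cases i
  · beta_reduce
    simp only [Fin.zero_eta, Fin.mk_one, Fin.reduceFinMk, Fin.isValue]
    rw [Finset.sum_erase _ (by simp)]
    rw [Fin.sum_univ_four]
    rw [n01, n02, n03]
    ext k
    have happ : ∀ (v : Fin 2 → ℝ) (k : Fin 2),
        ((WithLp.equiv 2 (Fin 2 → ℝ)).symm v : EuclideanSpace ℝ (Fin 2)) k = v k := fun _ _ => rfl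
    fin_cases k <;>
      simp only [rhombusPt, rhombusMass, PiLp.add_apply, PiLp.smul_apply, PiLp.sub_apply,
        PiLp.zero_apply, happ, Fin.zero_eta, Fin.mk_one, Fin.isValue, Matrix.cons_val_zero,
        Matrix.cons_val_one, Matrix.head_cons, smul_eq_mul, ← hmdef, ← hadef] <;>
      first
        | (rw [L1]; field_simp; ring)
        | (field_simp; ring)
        | ring
  · beta_reduce
    simp only [Fin.zero_eta, Fin.mk_one, Fin.reduceFinMk, Fin.isValue]
    rw [Finset.sum_erase _ (by simp)]
    rw [Fin.sum_univ_four]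
    rw [n10, n12, n13]
    ext k
    have happ : ∀ (v : Fin 2 → ℝ) (k : Fin 2),
        ((WithLp.equiv 2 (Fin 2 → ℝ)).symm v : EuclideanSpace ℝ (Fin 2)) k = v k := fun _ _ => rfl
    fin_cases k <;>
      simp only [rhombusPt, rhombusMass, PiLp.add_apply, PiLp.smul_apply, PiLp.sub_apply,
        PiLp.zero_apply, happ, Fin.zero_eta, Fin.mk_one, Fin.isValue, Matrix.cons_val_zero,
        Matrix.cons_val_one, Matrix.head_cons, smul_eq_mul, ← hmdef, ← hadef] <;>
      first
        | (rw [L2]; field_simp; ring)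
        | (field_simp; ring)
        | ring
  · beta_reduce
    simp only [Fin.zero_eta, Fin.mk_one, Fin.reduceFinMk, Fin.isValue]
    rw [Finset.sum_erase _ (by simp)]
    rw [Fin.sum_univ_four]
    rw [n20, n21, n23]
    ext k
    have happ : ∀ (v : Fin 2 → ℝ) (k : Fin 2),
        ((WithLp.equiv 2 (Fin 2 → ℝ)).symm v : EuclideanSpace ℝ (Fin 2)) k = v k := fun _ _ => rfl
    fin_cases k <;>
      simp only [rhombusPt, rhombusMass, PiLp.add_apply, PiLp.smul_apply, PiLp.sub_apply,
        PiLp.zero_apply, happ, Fin.zero_eta, Fin.mk_one, Fin.isValue, Matrix.cons_val_zero,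
        Matrix.cons_val_one, Matrix.head_cons, smul_eq_mul, ← hmdef, ← hadef] <;>
      first
        | (rw [L1]; field_simp; ring)
        | (field_simp; ring)
        | ring
  · beta_reduce
    simp only [Fin.zero_eta, Fin.mk_one, Fin.reduceFinMk, Fin.isValue]
    rw [Finset.sum_erase _ (by simp)]
    rw [Fin.sum_univ_four]
    rw [n30, n31, n32]
    ext k
    have happ : ∀ (v : Fin 2 → ℝ) (k : Fin 2),
        ((WithLp.equiv 2 (Fin 2 → ℝ)).symm v : EuclideanSpace ℝ (Fin 2)) k = v k := fun _ _ => rfl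
    fin_cases k <;>
      simp only [rhombusPt, rhombusMass, PiLp.add_apply, PiLp.smul_apply, PiLp.sub_apply,
        PiLp.zero_apply, happ, Fin.zero_eta, Fin.mk_one, Fin.isValue, Matrix.cons_val_zero,
        Matrix.cons_val_one, Matrix.head_cons, smul_eq_mul, ← hmdef, ← hadef] <;>
      first
        | (rw [L2]; field_simp; ring)
        | (field_simp; ring)
        | ring
end
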